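/- arXiv:2412.14994 — 6 statements merged into one kernel-verified Lean document; each statement's English description precedes it below -/
import Mathlib

section
/- Let (X,d,μ) be a space of homogeneous type, 0 < p < 1 ≤ q ≤ ∞. If {a_j} is a sequence of (p,q,T)-approximate atoms and {λ_j} ⊂ ℂ with Σ_j |λ_j|^p < ∞, then the series Σ_j λ_j a_j converges in the dual norm of ℓ_{1/p−1,T}(X) to a continuous linear functional g on ℓ_{1/p−1,T}(X) satisfying ‖g‖_{ℓ*_{1/p−1,T}} ≤ 2 (Σ_j |λ_j|^p)^{1/p}. -/
open MeasureTheory ENNReal Filter Topology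

noncomputable section

variable {X : Type*}

/-- Quasi-metric ball. -/
def hball (d : X → X → ℝ) (x : X) (r : ℝ) : Set X := {y | d x y < r}

/-- `(X,d,μ)` is a space of homogeneous type with quasi-triangle constant `A₀`,
doubling constant `A'` and upper dimension `γ`. -/
structure IsHomType [MeasurableSpace X] (d : X → X → ℝ) (μ : Measure X)
    (A₀ A' γ : ℝ) : Prop where
  A0_ge : 1 ≤ A₀
  A'_pos : 0 < A'
  gamma_pos : 0 < γ
  nonneg : ∀ x y, 0 ≤ d x y
  eq_zero : ∀ x y, d x y = 0 ↔ x = y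
  symm : ∀ x y, d x y = d y x
  tri : ∀ x y z, d x y ≤ A₀ * (d x z + d z y)
  meas : ∀ x r, MeasurableSet (hball d x r)
  pos : ∀ x r, 0 < r → 0 < μ (hball d x r)
  fin : ∀ x r, μ (hball d x r) < ⊤
  doubling : ∀ x r lam, 1 ≤ lam →
    μ (hball d x (lam * r)) ≤ ENNReal.ofReal (A' * lam ^ γ) * μ (hball d x r)

/-- `L` is an upper bound for all the local Lipschitz functionals `𝔑^B_{α,T}(φ)`,
i.e. an upper bound for the `ℓ_{α,T}` norm of `φ`. -/
def LipBound [MeasurableSpace X] (d : X → X → ℝ) (μ : Measure X) (α T : ℝ)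
    (φ : X → ℝ) (L : ℝ) : Prop :=
  ∀ x r, 0 < r →
    (r < T → ∀ y ∈ hball d x r, ∀ z ∈ hball d x r,
      |φ y - φ z| ≤ L * (μ (hball d x r)).toReal ^ α) ∧
    (T ≤ r → ∀ y ∈ hball d x r, |φ y| ≤ L * (μ (hball d x r)).toReal ^ α)

/-- A `(p,q,T)`-approximate atom. -/
def IsApproxAtom [MeasurableSpace X] (d : X → X → ℝ) (μ : Measure X)
    (p : ℝ) (q : ℝ≥0∞) (T : ℝ) (a : X → ℝ) : Prop :=
  ∃ (x_B : X) (r_B : ℝ), 0 < r_B ∧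
    (∀ x, a x ≠ 0 → x ∈ hball d x_B r_B) ∧
    eLpNorm a q μ ≤ μ (hball d x_B r_B) ^ (1/q.toReal - 1/p) ∧
    Integrable a μ ∧
    |∫ x, a x ∂μ| ≤ (μ (hball d x_B T)).toReal ^ (1 - 1/p)


/-- The integral of an approximate atom against a local Lipschitz function is at most `2L`. -/
lemma atom_pairing_bound [MeasurableSpace X] (d : X → X → ℝ) (μ : Measure X) (A₀ A' γ : ℝ)
    (hX : IsHomType d μ A₀ A' γ) (p : ℝ) (q : ℝ≥0∞) (hp : 0 < p) (hp1 : p < 1)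
    (hq : 1 ≤ q) (T : ℝ) (hT : 0 < T)
    (a : X → ℝ) (ha : IsApproxAtom d μ p q T a)
    (φ : X → ℝ) (L : ℝ) (hL : 0 ≤ L) (hφ : LipBound d μ (1/p - 1) T φ L)
    (haφ : Integrable (fun x => a x * φ x) μ) :
    |∫ x, a x * φ x ∂μ| ≤ 2 * L := by
  obtain ⟨xB, rB, hr, hsupp, hqn, hint, hmean⟩ := ha
  set B : Set X := hball d xB rB with hBdef
  have hBmeas : MeasurableSet B := hX.meas xB rB
  have hB0 : μ B ≠ 0 := (hX.pos xB rB hr).ne'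
  have hBtop : μ B ≠ ⊤ := (hX.fin xB rB).ne
  have hBtpos : 0 < (μ B).toReal := ENNReal.toReal_pos hB0 hBtop
  have hsub : Function.support a ⊆ B := fun x hx => hsupp x hx
  -- L¹ bound on the atom
  have h1 : eLpNorm a 1 μ ≤ μ B ^ (1 - 1/p) := by
    calc eLpNorm a 1 μ = eLpNorm a 1 (μ.restrict B) :=
          (eLpNorm_restrict_eq_of_support_subset hsub).symm
      _ ≤ eLpNorm a q (μ.restrict B) * (μ.restrict B) Set.univ ^ (1/(1:ℝ≥0∞).toReal - 1/q.toReal) :=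
          eLpNorm_le_eLpNorm_mul_rpow_measure_univ hq hint.aestronglyMeasurable.restrict
      _ = eLpNorm a q μ * μ B ^ (1 - 1/q.toReal) := by
          rw [eLpNorm_restrict_eq_of_support_subset hsub, Measure.restrict_apply_univ]
          norm_num
      _ ≤ μ B ^ (1/q.toReal - 1/p) * μ B ^ (1 - 1/q.toReal) := by gcongr
      _ = μ B ^ (1 - 1/p) := by
          rw [← ENNReal.rpow_add _ _ hB0 hBtop]; ring_nf
  have hInt1 : ∫ x, |a x| ∂μ ≤ (μ B).toReal ^ (1 - 1/p) := by
    have h2 : ∫ x, |a x| ∂μ = (eLpNorm a 1 μ).toReal := by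
      rw [eLpNorm_one_eq_lintegral_enorm,
        ← integral_norm_eq_lintegral_enorm hint.aestronglyMeasurable]
      simp [Real.norm_eq_abs]
    rw [h2, ENNReal.toReal_rpow]
    exact ENNReal.toReal_mono (by simp [ENNReal.rpow_eq_top_iff, hB0, hBtop]) h1
  have habs : Integrable (fun x => |a x|) μ := hint.abs
  rcases lt_or_ge rB T with hrT | hTr
  · -- small ball case
    have hxB : xB ∈ B := by
      simp only [hBdef, hball, Set.mem_setOf_eq, (hX.eq_zero xB xB).mpr rfl]; exact hr
    have hxBT : xB ∈ hball d xB T := by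
      simp only [hball, Set.mem_setOf_eq, (hX.eq_zero xB xB).mpr rfl]; exact hT
    set c := φ xB with hc
    set K := L * (μ B).toReal ^ (1/p - 1) with hK
    have hK0 : 0 ≤ K := mul_nonneg hL (Real.rpow_nonneg hBtpos.le _)
    have hpt : ∀ x, |a x * (φ x - c)| ≤ K * |a x| := by
      intro x
      by_cases hx : a x = 0
      · simp [hx]
      · rw [abs_mul, mul_comm]
        exact mul_le_mul_of_nonneg_right
          ((hφ xB rB hr).1 hrT x (hsupp x hx) xB hxB) (abs_nonneg _)
    have hI : Integrable (fun x => a x * (φ x - c)) μ := by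
      simp only [mul_sub]; exact haφ.sub (hint.mul_const c)
    have hsplit : ∫ x, a x * φ x ∂μ = (∫ x, a x * (φ x - c) ∂μ) + c * ∫ x, a x ∂μ := by
      rw [show (fun x => a x * (φ x - c)) = fun x => a x * φ x - a x * c by ext x; ring,
        integral_sub haφ (hint.mul_const c)]
      rw [integral_mul_const]; ring
    have hb1 : |∫ x, a x * (φ x - c) ∂μ| ≤ L := by
      calc |∫ x, a x * (φ x - c) ∂μ| ≤ ∫ x, |a x * (φ x - c)| ∂μ := by
            simpa only [Real.norm_eq_abs] using norm_integral_le_integral_norm (fun x => a x * (φ x - c))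
        _ ≤ ∫ x, K * |a x| ∂μ := integral_mono hI.abs (habs.const_mul K) hpt
        _ = K * ∫ x, |a x| ∂μ := integral_const_mul K _
        _ ≤ K * (μ B).toReal ^ (1 - 1/p) := by
            exact mul_le_mul_of_nonneg_left hInt1 hK0
        _ = L * ((μ B).toReal ^ (1/p - 1) * (μ B).toReal ^ (1 - 1/p)) := by rw [hK]; ring
        _ = L := by rw [← Real.rpow_add hBtpos]; norm_num
    have hBT0 : 0 < (μ (hball d xB T)).toReal :=
      ENNReal.toReal_pos (hX.pos xB T hT).ne' (hX.fin xB T).ne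
    have hb2 : |c * ∫ x, a x ∂μ| ≤ L := by
      rw [abs_mul]
      calc |c| * |∫ x, a x ∂μ|
          ≤ (L * (μ (hball d xB T)).toReal ^ (1/p - 1)) * (μ (hball d xB T)).toReal ^ (1 - 1/p) :=
            mul_le_mul ((hφ xB T hT).2 le_rfl xB hxBT) hmean (abs_nonneg _)
              (mul_nonneg hL (Real.rpow_nonneg hBT0.le _))
        _ = L * ((μ (hball d xB T)).toReal ^ (1/p - 1) * (μ (hball d xB T)).toReal ^ (1 - 1/p)) :=
            by ring
        _ = L := by rw [← Real.rpow_add hBT0]; norm_num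
    calc |∫ x, a x * φ x ∂μ| ≤ |∫ x, a x * (φ x - c) ∂μ| + |c * ∫ x, a x ∂μ| := by
          rw [hsplit]; exact abs_add_le _ _
      _ ≤ L + L := add_le_add hb1 hb2
      _ = 2 * L := by ring
  · -- big ball case
    set K := L * (μ B).toReal ^ (1/p - 1) with hK
    have hK0 : 0 ≤ K := mul_nonneg hL (Real.rpow_nonneg hBtpos.le _)
    have hpt : ∀ x, |a x * φ x| ≤ K * |a x| := by
      intro x
      by_cases hx : a x = 0
      · simp [hx]
      · rw [abs_mul, mul_comm]
        exact mul_le_mul_of_nonneg_right ((hφ xB rB hr).2 hTr x (hsupp x hx)) (abs_nonneg _)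
    calc |∫ x, a x * φ x ∂μ| ≤ ∫ x, |a x * φ x| ∂μ := by
          simpa only [Real.norm_eq_abs] using norm_integral_le_integral_norm (fun x => a x * φ x)
      _ ≤ ∫ x, K * |a x| ∂μ := integral_mono haφ.abs (habs.const_mul K) hpt
      _ = K * ∫ x, |a x| ∂μ := integral_const_mul K _
      _ ≤ K * (μ B).toReal ^ (1 - 1/p) := mul_le_mul_of_nonneg_left hInt1 hK0
      _ = L * ((μ B).toReal ^ (1/p - 1) * (μ B).toReal ^ (1 - 1/p)) := by rw [hK]; ring
      _ = L := by rw [← Real.rpow_add hBtpos]; norm_num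
      _ ≤ 2 * L := by linarith

/-- Series of approximate atoms with `ℓ^p` coefficients converge in the dual of
`ℓ_{1/p-1,T}(X)`, with dual norm at most `2 (Σ|λ_j|^p)^{1/p}`. -/
theorem stmt2 [MeasurableSpace X] (d : X → X → ℝ) (μ : Measure X) (A₀ A' γ : ℝ)
    (hX : IsHomType d μ A₀ A' γ) (p : ℝ) (q : ℝ≥0∞) (hp : 0 < p) (hp1 : p < 1)
    (hq : 1 ≤ q) (T : ℝ) (hT : 0 < T)
    (a : ℕ → X → ℝ) (ha : ∀ j, IsApproxAtom d μ p q T (a j))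
    (lam : ℕ → ℝ) (hlam : Summable fun j => |lam j| ^ p)
    (φ : X → ℝ) (L : ℝ) (hL : 0 ≤ L) (hφ : LipBound d μ (1/p - 1) T φ L)
    (haφ : ∀ j, Integrable (fun x => a j x * φ x) μ) :
    Summable (fun j => lam j * ∫ x, a j x * φ x ∂μ) ∧
      |∑' j, lam j * ∫ x, a j x * φ x ∂μ| ≤
        2 * (∑' j, |lam j| ^ p) ^ (1/p) * L := by
  obtain ⟨hM0, hMdef⟩ : 0 ≤ (∑' j, |lam j| ^ p) ∧ True :=
    ⟨tsum_nonneg fun j => Real.rpow_nonneg (abs_nonneg _) p, trivial⟩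
  set M := ∑' j, |lam j| ^ p with hM
  have hatom : ∀ j, |∫ x, a j x * φ x ∂μ| ≤ 2 * L := fun j =>
    atom_pairing_bound d μ A₀ A' γ hX p q hp hp1 hq T hT (a j) (ha j) φ L hL hφ (haφ j)
  have hcoef : ∀ j, |lam j| ≤ |lam j| ^ p * M ^ ((1 - p)/p) := by
    intro j
    have h1 : |lam j| ^ p ≤ M :=
      Summable.le_tsum hlam j fun i _ => Real.rpow_nonneg (abs_nonneg _) p
    have h2 : |lam j| ^ (1 - p) ≤ M ^ ((1 - p)/p) := by
      have : |lam j| ^ (1 - p) = (|lam j| ^ p) ^ ((1 - p)/p) := by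
        rw [← Real.rpow_mul (abs_nonneg _)]
        congr 1; field_simp
      rw [this]
      exact Real.rpow_le_rpow (Real.rpow_nonneg (abs_nonneg _) p) h1
        (div_nonneg (by linarith) hp.le)
    calc |lam j| = |lam j| ^ (p + (1 - p)) := by norm_num
      _ = |lam j| ^ p * |lam j| ^ (1 - p) :=
          Real.rpow_add' (abs_nonneg _) (by norm_num)
      _ ≤ |lam j| ^ p * M ^ ((1 - p)/p) :=
          mul_le_mul_of_nonneg_left h2 (Real.rpow_nonneg (abs_nonneg _) p)
  have hbound : ∀ j, ‖lam j * ∫ x, a j x * φ x ∂μ‖ ≤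
      2 * L * M ^ ((1 - p)/p) * (|lam j| ^ p) := by
    intro j
    rw [Real.norm_eq_abs, abs_mul]
    calc |lam j| * |∫ x, a j x * φ x ∂μ| ≤ (|lam j| ^ p * M ^ ((1 - p)/p)) * (2 * L) :=
          mul_le_mul (hcoef j) (hatom j) (abs_nonneg _)
            (mul_nonneg (Real.rpow_nonneg (abs_nonneg _) p) (Real.rpow_nonneg hM0 _))
      _ = 2 * L * M ^ ((1 - p)/p) * (|lam j| ^ p) := by ring
  have hsum2 : Summable fun j => 2 * L * M ^ ((1 - p)/p) * (|lam j| ^ p) :=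
    hlam.mul_left _
  have hsumnorm : Summable fun j => ‖lam j * ∫ x, a j x * φ x ∂μ‖ :=
    hsum2.of_nonneg_of_le (fun j => norm_nonneg _) hbound
  have hsum : Summable fun j => lam j * ∫ x, a j x * φ x ∂μ :=
    hsumnorm.of_norm
  refine ⟨hsum, ?_⟩
  calc |∑' j, lam j * ∫ x, a j x * φ x ∂μ|
      ≤ ∑' j, ‖lam j * ∫ x, a j x * φ x ∂μ‖ := by
        simpa only [Real.norm_eq_abs] using norm_tsum_le_tsum_norm hsumnorm
    _ ≤ ∑' j, 2 * L * M ^ ((1 - p)/p) * (|lam j| ^ p) :=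
        Summable.tsum_le_tsum hbound hsumnorm hsum2
    _ = 2 * L * M ^ ((1 - p)/p) * M := by rw [tsum_mul_left]
    _ = 2 * M ^ (1/p) * L := by
        have : M ^ ((1 - p)/p) * M = M ^ (1/p) := by
          nth_rw 2 [← Real.rpow_one M]
          rw [← Real.rpow_add' hM0 (by have : 0 < (1 - p)/p := div_pos (by linarith) hp; linarith)]
          congr 1; field_simp; ring
        rw [← this]; ring
end
end

section
/- Let (X,d,μ) be a space of homogeneous type with doubling constant A′, 0 < p < 1 ≤ q ≤ ∞, and let a be a (p,q,T)-approximate atom supported in ball B. Then for any f in the local Campanato space c_{1/p−1,q′,T}(X) (q′ the conjugate exponent), |∫ a f dμ| ≤ (1 + (A′)^{2/p} / ((A′)^{1/p−1} − 1)) ‖f‖_{c_{1/p−1,q′,T}}. -/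
open MeasureTheory ENNReal Filter Topology

noncomputable section

variable {X : Type*}

/-- The local mean `m_{B,T}(f)`: the average of `f` over the ball if `r < T`, else `0`. -/
def mloc [MeasurableSpace X] (d : X → X → ℝ) (μ : Measure X) (T : ℝ) (f : X → ℝ)
    (x : X) (r : ℝ) : ℝ :=
  if r < T then ⨍ y in hball d x r, f y ∂μ else 0

private lemma hball_mono {d : X → X → ℝ} {x : X} {r s : ℝ} (h : r ≤ s) :
    hball d x r ⊆ hball d x s := fun _ hy => lt_of_lt_of_le hy h

private lemma measure_hball_left [MeasurableSpace X] {d : X → X → ℝ} {μ : Measure X}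
    {A₀ A' γ : ℝ} (hX : IsHomType d μ A₀ A' γ) (x : X) {u : ℝ} (hu : 0 < u) :
    μ (hball d x u) = ⨆ n : ℕ, μ (hball d x (u * (1 - 1/((n:ℝ)+2)))) := by
  have hmono : Monotone (fun n : ℕ => hball d x (u * (1 - 1/((n:ℝ)+2)))) := by
    intro m n hmn
    apply hball_mono
    have h1 : 1/((n:ℝ)+2) ≤ 1/((m:ℝ)+2) := by
      apply one_div_le_one_div_of_le (by positivity)
      have : (m:ℝ) ≤ n := Nat.cast_le.2 hmn
      linarith
    nlinarith
  rw [← hmono.measure_iUnion]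
  congr 1
  ext y
  simp only [Set.mem_iUnion, hball, Set.mem_setOf_eq]
  constructor
  · intro hy
    have hε : 0 < u - d x y := by linarith
    obtain ⟨n, hn⟩ := exists_nat_gt (u / (u - d x y))
    refine ⟨n, ?_⟩
    have h3 : (0:ℝ) < (n:ℝ) + 2 := by positivity
    have h2 : u / ((n:ℝ)+2) < u - d x y := by
      apply (div_lt_iff₀ h3).2
      have : u / (u - d x y) < (n:ℝ) + 2 := by linarith
      calc u = (u / (u - d x y)) * (u - d x y) := by field_simp
        _ < ((n:ℝ)+2) * (u - d x y) := by
            apply mul_lt_mul_of_pos_right this hε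
        _ = (u - d x y) * ((n:ℝ)+2) := by ring
    have heq : u * (1 - 1/((n:ℝ)+2)) = u - u/((n:ℝ)+2) := by field_simp
    linarith [heq, h2]
  · rintro ⟨n, hn⟩
    have h3 : (0:ℝ) < 1/((n:ℝ)+2) := by positivity
    nlinarith [hX.nonneg x y]


private lemma step_lemma [MeasurableSpace X] {d : X → X → ℝ} {μ : Measure X}
    {A₀ A' γ : ℝ} (hX : IsHomType d μ A₀ A' γ) {α : ℝ} (hα : 0 ≤ α) {q q' : ℝ≥0∞}
    (hq' : 1 ≤ q') (hss' : 1/q.toReal + 1/q'.toReal = 1)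
    {T L : ℝ} (hL : 0 ≤ L) {f : X → ℝ}
    (hf : ∀ x r, 0 < r →
      eLpNorm (fun y => f y - mloc d μ T f x r) q' (μ.restrict (hball d x r))
        ≤ ENNReal.ofReal L * μ (hball d x r) ^ (α + 1/q'.toReal))
    (x : X) {r t : ℝ} (hr : 0 < r) (hrt : r ≤ t) :
    |(⨍ y in hball d x r, f y ∂μ) - mloc d μ T f x t| ≤
      L * (μ (hball d x t)).toReal ^ (α + 1) / (μ (hball d x r)).toReal := by
  have ht : 0 < t := hr.trans_le hrt
  have hsub : hball d x r ⊆ hball d x t := hball_mono hrt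
  have hρr0 : μ (hball d x r) ≠ 0 := (hX.pos x r hr).ne'
  have hρrT : μ (hball d x r) ≠ ⊤ := (hX.fin x r).ne
  have hρt0 : μ (hball d x t) ≠ 0 := (hX.pos x t ht).ne'
  have hρtT : μ (hball d x t) ≠ ⊤ := (hX.fin x t).ne
  have hvr : 0 < (μ (hball d x r)).toReal := ENNReal.toReal_pos hρr0 hρrT
  have hvt : 0 < (μ (hball d x t)).toReal := ENNReal.toReal_pos hρt0 hρtT
  set c := mloc d μ T f x t with hc
  by_cases hint : IntegrableOn f (hball d x r) μ
  · have haesm : AEStronglyMeasurable (fun y => f y - c) (μ.restrict (hball d x r)) :=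
      hint.aestronglyMeasurable.sub aestronglyMeasurable_const
    have key : ∫⁻ y, ENNReal.ofReal ‖f y - c‖ ∂(μ.restrict (hball d x r))
        ≤ ENNReal.ofReal L * μ (hball d x t) ^ (α + 1) := by
      have e1 : ∫⁻ y, ENNReal.ofReal ‖f y - c‖ ∂(μ.restrict (hball d x r))
          = eLpNorm (fun y => f y - c) 1 (μ.restrict (hball d x r)) := by
        rw [eLpNorm_one_eq_lintegral_enorm]
        simp_rw [ofReal_norm]
      rw [e1]
      have e2 := eLpNorm_le_eLpNorm_mul_rpow_measure_univ (p := 1) (q := q')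
        hq' haesm
      rw [Measure.restrict_apply_univ, ENNReal.toReal_one] at e2
      have hexp2 : 1/(1:ℝ) - 1/q'.toReal = 1/q.toReal := by linarith
      rw [hexp2] at e2
      have e3 : eLpNorm (fun y => f y - c) q' (μ.restrict (hball d x r))
          ≤ ENNReal.ofReal L * μ (hball d x t) ^ (α + 1/q'.toReal) := by
        refine le_trans (eLpNorm_mono_measure _ (Measure.restrict_mono hsub le_rfl)) ?_
        exact hf x t ht
      calc eLpNorm (fun y => f y - c) 1 (μ.restrict (hball d x r))
          ≤ (ENNReal.ofReal L * μ (hball d x t) ^ (α + 1/q'.toReal))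
              * μ (hball d x r) ^ (1/q.toReal) :=
            le_trans e2 (mul_le_mul_left e3 _)
        _ ≤ (ENNReal.ofReal L * μ (hball d x t) ^ (α + 1/q'.toReal))
              * μ (hball d x t) ^ (1/q.toReal) := by
            apply mul_le_mul_right
            exact ENNReal.rpow_le_rpow (measure_mono hsub) (by positivity)
        _ = ENNReal.ofReal L * μ (hball d x t) ^ (α + 1) := by
            rw [mul_assoc, ← ENNReal.rpow_add _ _ hρt0 hρtT,
              show α + 1/q'.toReal + 1/q.toReal = α + 1 by linarith]
    have havg : (⨍ y in hball d x r, f y ∂μ) - c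
        = (μ (hball d x r)).toReal⁻¹ * ∫ y in hball d x r, (f y - c) ∂μ := by
      rw [setAverage_eq, integral_sub hint (integrableOn_const (hX.fin x r).ne),
        setIntegral_const, smul_eq_mul, smul_eq_mul, mul_sub]
      have : (μ (hball d x r)).toReal⁻¹ * ((μ (hball d x r)).toReal * c) = c := by
        field_simp
      rw [measureReal_def, this]
    have hRne : ENNReal.ofReal L * μ (hball d x t) ^ (α + 1) ≠ ⊤ :=
      ENNReal.mul_ne_top ENNReal.ofReal_ne_top
        (ENNReal.rpow_ne_top_of_nonneg (by linarith) hρtT)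
    have h5 : (∫⁻ y, ENNReal.ofReal ‖f y - c‖ ∂(μ.restrict (hball d x r))).toReal
        ≤ L * (μ (hball d x t)).toReal ^ (α + 1) := by
      have h6 := ENNReal.toReal_mono hRne key
      rwa [ENNReal.toReal_mul, ENNReal.toReal_ofReal hL, ← ENNReal.toReal_rpow] at h6
    have h4 : |∫ y in hball d x r, (f y - c) ∂μ|
        ≤ (∫⁻ y, ENNReal.ofReal ‖f y - c‖ ∂(μ.restrict (hball d x r))).toReal := by
      rw [← Real.norm_eq_abs]
      exact norm_integral_le_lintegral_norm _
    calc |(⨍ y in hball d x r, f y ∂μ) - c|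
        = (μ (hball d x r)).toReal⁻¹ * |∫ y in hball d x r, (f y - c) ∂μ| := by
          rw [havg, abs_mul, abs_of_nonneg (inv_nonneg.2 ENNReal.toReal_nonneg)]
      _ ≤ (μ (hball d x r)).toReal⁻¹ * (L * (μ (hball d x t)).toReal ^ (α + 1)) :=
          mul_le_mul_of_nonneg_left (h4.trans h5) (inv_nonneg.2 ENNReal.toReal_nonneg)
      _ = L * (μ (hball d x t)).toReal ^ (α + 1) / (μ (hball d x r)).toReal := by
          rw [div_eq_mul_inv]; ring
  · have h1 : (⨍ y in hball d x r, f y ∂μ) = 0 := by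
      rw [setAverage_eq, integral_undef hint, smul_zero]
    have h2 : c = 0 := by
      rw [hc]
      unfold mloc
      split_ifs with h
      · rw [setAverage_eq, integral_undef (fun hI => hint (MeasureTheory.IntegrableOn.mono_set hI hsub)), smul_zero]
      · rfl
    rw [h1, h2, sub_zero, abs_zero]
    apply div_nonneg (mul_nonneg hL (Real.rpow_nonneg ENNReal.toReal_nonneg _))
      ENNReal.toReal_nonneg

private lemma chain_lemma [MeasurableSpace X] {d : X → X → ℝ} {μ : Measure X}
    {A₀ A' γ : ℝ} (hX : IsHomType d μ A₀ A' γ) (hA' : 1 < A')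
    {α : ℝ} (hα : 0 < α) {q q' : ℝ≥0∞}
    (hq' : 1 ≤ q') (hss' : 1/q.toReal + 1/q'.toReal = 1)
    {T L : ℝ} (hL : 0 ≤ L) {f : X → ℝ}
    (hf : ∀ x r, 0 < r →
      eLpNorm (fun y => f y - mloc d μ T f x r) q' (μ.restrict (hball d x r))
        ≤ ENNReal.ofReal L * μ (hball d x r) ^ (α + 1/q'.toReal))
    (x : X) {r : ℝ} (hr : 0 < r) :
    ∀ n : ℕ, ∀ t, r ≤ t → t ≤ T →
      (μ (hball d x t)).toReal ≤ A' ^ n * (A' ^ 2 * (μ (hball d x r)).toReal) →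
      |(⨍ y in hball d x r, f y ∂μ) - mloc d μ T f x t| ≤
        (A' ^ 2 * (A' ^ α / (A' ^ α - 1)) * L) * (μ (hball d x t)).toReal ^ α := by
  have hA0 : (0:ℝ) < A' := lt_trans one_pos hA'
  have hx1 : 1 < A' ^ α := (Real.one_lt_rpow_iff_of_pos hA0).2 (Or.inl ⟨hA', hα⟩)
  set K := A' ^ 2 * (A' ^ α / (A' ^ α - 1)) * L with hK
  have hKnn : 0 ≤ K := by
    apply mul_nonneg (mul_nonneg (by positivity) _) hL
    exact div_nonneg (Real.rpow_nonneg (le_of_lt hA0) _) (by linarith)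
  have vmono : ∀ s u : ℝ, s ≤ u →
      (μ (hball d x s)).toReal ≤ (μ (hball d x u)).toReal := fun s u hsu =>
    ENNReal.toReal_mono (hX.fin x u).ne (measure_mono (hball_mono hsu))
  have hvr : 0 < (μ (hball d x r)).toReal :=
    ENNReal.toReal_pos (hX.pos x r hr).ne' (hX.fin x r).ne
  have hbase : ∀ t, r ≤ t →
      (μ (hball d x t)).toReal ≤ A' ^ 2 * (μ (hball d x r)).toReal →
      |(⨍ y in hball d x r, f y ∂μ) - mloc d μ T f x t|
        ≤ K * (μ (hball d x t)).toReal ^ α := by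
    intro t hrt hle
    have ht : 0 < t := hr.trans_le hrt
    have hvt : 0 < (μ (hball d x t)).toReal :=
      ENNReal.toReal_pos (hX.pos x t ht).ne' (hX.fin x t).ne
    refine le_trans (step_lemma hX (le_of_lt hα) hq' hss' hL hf x hr hrt) ?_
    rw [div_le_iff₀ hvr, Real.rpow_add hvt, Real.rpow_one]
    have hvtα : (0:ℝ) ≤ (μ (hball d x t)).toReal ^ α :=
      Real.rpow_nonneg ENNReal.toReal_nonneg _
    have hfrac : (1:ℝ) ≤ A' ^ α / (A' ^ α - 1) := by
      rw [le_div_iff₀ (by linarith)]; linarith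
    calc L * ((μ (hball d x t)).toReal ^ α * (μ (hball d x t)).toReal)
        = (L * (μ (hball d x t)).toReal ^ α) * (μ (hball d x t)).toReal := by ring
      _ ≤ (L * (μ (hball d x t)).toReal ^ α) * (A' ^ 2 * (μ (hball d x r)).toReal) :=
          mul_le_mul_of_nonneg_left hle (mul_nonneg hL hvtα)
      _ = (A' ^ 2 * 1 * L) * (μ (hball d x t)).toReal ^ α * (μ (hball d x r)).toReal := by
          ring
      _ ≤ K * (μ (hball d x t)).toReal ^ α * (μ (hball d x r)).toReal := by
          apply mul_le_mul_of_nonneg_right _ (le_of_lt hvr)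
          apply mul_le_mul_of_nonneg_right _ hvtα
          rw [hK]
          apply mul_le_mul_of_nonneg_right _ hL
          apply mul_le_mul_of_nonneg_left hfrac (by positivity)
  intro n
  induction n with
  | zero =>
      intro t hrt htT hle
      rw [pow_zero, one_mul] at hle
      exact hbase t hrt hle
  | succ n ih =>
      intro t hrt htT hle
      by_cases hcase : (μ (hball d x t)).toReal ≤ A' ^ 2 * (μ (hball d x r)).toReal
      · exact hbase t hrt hcase
      · push_neg at hcase
        have ht : 0 < t := hr.trans_le hrt
        have hvt : 0 < (μ (hball d x t)).toReal :=
          ENNReal.toReal_pos (hX.pos x t ht).ne' (hX.fin x t).ne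
        set vt := (μ (hball d x t)).toReal with hvt'
        set S : Set ℝ :=
          {s | r ≤ s ∧ s ≤ t ∧ (μ (hball d x s)).toReal ≤ vt / A'} with hS
        have hA2 : A' ≤ A' ^ 2 := by nlinarith
        have hrS : r ∈ S := by
          refine ⟨le_refl r, hrt, ?_⟩
          rw [le_div_iff₀ hA0]
          nlinarith [hvr]
        have hbdd : BddAbove S := ⟨t, fun s hs => hs.2.1⟩
        set u := sSup S with hu
        have hru : r ≤ u := le_csSup hbdd hrS
        have hut : u ≤ t := csSup_le ⟨r, hrS⟩ (fun s hs => hs.2.1)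
        have hu0 : 0 < u := lt_of_lt_of_le hr hru
        have h1 : ∀ s, s < u → (μ (hball d x s)).toReal ≤ vt / A' := by
          intro s hs
          rcases le_or_gt s r with h | h
          · exact le_trans (vmono s r h) hrS.2.2
          · obtain ⟨s', hs'S, hss's⟩ := exists_lt_of_lt_csSup ⟨r, hrS⟩ hs
            exact le_trans (vmono s s' (le_of_lt hss's)) hs'S.2.2
        have hvtA'nn : 0 ≤ vt / A' := div_nonneg (le_of_lt hvt) (le_of_lt hA0)
        have h2 : (μ (hball d x u)).toReal ≤ vt / A' := by
          have hiSup := measure_hball_left hX x hu0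
          have hle2 : μ (hball d x u) ≤ ENNReal.ofReal (vt / A') := by
            rw [hiSup]
            refine iSup_le fun n => ?_
            refine (ENNReal.le_ofReal_iff_toReal_le (hX.fin x _).ne hvtA'nn).2 ?_
            refine h1 _ ?_
            have hpos : (0:ℝ) < 1/((n:ℝ)+2) := by positivity
            nlinarith
          exact ENNReal.toReal_le_of_le_ofReal hvtA'nn hle2
        have hult : u < t := by
          rcases lt_or_eq_of_le hut with h | h
          · exact h
          · exfalso
            rw [h] at h2
            have : vt / A' < vt := div_lt_self hvt hA'
            rw [← hvt'] at h2
            linarith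
        have hvu : 0 < (μ (hball d x u)).toReal :=
          ENNReal.toReal_pos (hX.pos x u hu0).ne' (hX.fin x u).ne
        have h4 : vt ≤ A' ^ 2 * (μ (hball d x u)).toReal := by
          by_contra hcon
          push_neg at hcon
          set vu := (μ (hball d x u)).toReal with hvu'
          have hratio : 1 < vt / (A' ^ 2 * vu) := by
            rw [lt_div_iff₀ (by positivity)]; linarith
          have hrationn : 0 < vt / (A' ^ 2 * vu) := lt_trans one_pos hratio
          set lam := (vt / (A' ^ 2 * vu)) ^ (1/γ) with hlam
          have hlam1 : 1 < lam := by
            rw [hlam]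
            exact (Real.one_lt_rpow_iff_of_pos hrationn).2
              (Or.inl ⟨hratio, one_div_pos.2 hX.gamma_pos⟩)
          have hlamγ : lam ^ γ = vt / (A' ^ 2 * vu) := by
            rw [hlam, ← Real.rpow_mul (le_of_lt hrationn), one_div,
              inv_mul_cancel₀ (ne_of_gt hX.gamma_pos), Real.rpow_one]
          have hdb := hX.doubling x u lam (le_of_lt hlam1)
          have hdb' : (μ (hball d x (lam * u))).toReal ≤ A' * lam ^ γ * vu := by
            have hne : ENNReal.ofReal (A' * lam ^ γ) * μ (hball d x u) ≠ ⊤ :=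
              ENNReal.mul_ne_top ENNReal.ofReal_ne_top (hX.fin x u).ne
            have h6 := ENNReal.toReal_mono hne hdb
            rwa [ENNReal.toReal_mul,
              ENNReal.toReal_ofReal (by positivity)] at h6
          have hval : A' * lam ^ γ * vu = vt / A' := by
            rw [hlamγ]
            field_simp
          rw [hval] at hdb'
          have hulamu : u < lam * u := (lt_mul_iff_one_lt_left hu0).2 hlam1
          rcases le_or_gt (lam * u) t with h | h
          · have hmem : lam * u ∈ S := ⟨le_trans hru (le_of_lt hulamu), h, hdb'⟩
            have hcontra : lam * u ≤ u := le_csSup hbdd hmem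
            exact absurd hcontra (not_le.2 hulamu)
          · have h7 : vt ≤ (μ (hball d x (lam * u))).toReal :=
              vmono t (lam * u) (le_of_lt h)
            have h8 : vt / A' < vt := div_lt_self hvt hA'
            exact lt_irrefl vt (lt_of_le_of_lt (h7.trans hdb') h8)
        -- use the induction hypothesis at u
        have huT : u ≤ T := le_of_lt (lt_of_lt_of_le hult htT)
        have hvu_le : (μ (hball d x u)).toReal
            ≤ A' ^ n * (A' ^ 2 * (μ (hball d x r)).toReal) := by
          have h5 : vt ≤ A' ^ (n+1) * (A' ^ 2 * (μ (hball d x r)).toReal) := hle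
          have h9 : vt / A' ≤ A' ^ n * (A' ^ 2 * (μ (hball d x r)).toReal) := by
            rw [div_le_iff₀ hA0, pow_succ] at *
            nlinarith
          exact le_trans h2 h9
        have hIH := ih u hru huT hvu_le
        have hmu : mloc d μ T f x u = ⨍ y in hball d x u, f y ∂μ := by
          unfold mloc
          exact if_pos (lt_of_lt_of_le hult htT)
        have hstep2 := step_lemma hX (le_of_lt hα) hq' hss' hL hf x hu0 (le_of_lt hult)
        rw [← hmu] at hstep2
        have htri : |(⨍ y in hball d x r, f y ∂μ) - mloc d μ T f x t|
            ≤ K * (μ (hball d x u)).toReal ^ α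
              + L * vt ^ (α + 1) / (μ (hball d x u)).toReal :=
          le_trans (abs_sub_le _ (mloc d μ T f x u) _) (add_le_add hIH hstep2)
        refine le_trans htri ?_
        have hvuα : (μ (hball d x u)).toReal ^ α ≤ (vt/A') ^ α :=
          Real.rpow_le_rpow ENNReal.toReal_nonneg h2 (le_of_lt hα)
        have hdiv : L * vt ^ (α + 1) / (μ (hball d x u)).toReal
            ≤ L * vt ^ α * A' ^ 2 := by
          rw [div_le_iff₀ hvu, Real.rpow_add hvt, Real.rpow_one]
          calc L * (vt ^ α * vt) = (L * vt ^ α) * vt := by ring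
            _ ≤ (L * vt ^ α) * (A' ^ 2 * (μ (hball d x u)).toReal) :=
                mul_le_mul_of_nonneg_left h4
                  (mul_nonneg hL (Real.rpow_nonneg ENNReal.toReal_nonneg _))
            _ = L * vt ^ α * A' ^ 2 * (μ (hball d x u)).toReal := by ring
        have hfin : K * (vt/A') ^ α + L * vt ^ α * A' ^ 2 = K * vt ^ α := by
          rw [Real.div_rpow ENNReal.toReal_nonneg (le_of_lt hA0), hK]
          have hxne : A' ^ α - 1 ≠ 0 := by linarith
          have hxpos : (0:ℝ) < A' ^ α := lt_trans one_pos hx1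
          field_simp
          ring
        have hKvu : K * (μ (hball d x u)).toReal ^ α ≤ K * (vt/A') ^ α :=
          mul_le_mul_of_nonneg_left hvuα hKnn
        linarith

/-- Pairing of a `(p,q,T)`-approximate atom with a local Campanato function. -/
theorem stmt7 [MeasurableSpace X] (d : X → X → ℝ) (μ : Measure X) (A₀ A' γ : ℝ)
    (hX : IsHomType d μ A₀ A' γ) (hA' : 1 < A')
    (p : ℝ) (hp : 0 < p) (hp1 : p < 1) (q q' : ℝ≥0∞) (hq : 1 ≤ q)
    (hqq' : 1/q + 1/q' = 1) (T : ℝ) (hT : 0 < T)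
    (a : X → ℝ) (ha : IsApproxAtom d μ p q T a)
    (f : X → ℝ) (L : ℝ) (hL : 0 ≤ L)
    (hf : ∀ x r, 0 < r →
      eLpNorm (fun y => f y - mloc d μ T f x r) q' (μ.restrict (hball d x r))
        ≤ ENNReal.ofReal L * μ (hball d x r) ^ ((1/p - 1) + 1/q'.toReal))
    (haf : Integrable (fun x => a x * f x) μ) :
    |∫ x, a x * f x ∂μ| ≤ (1 + A' ^ ((2:ℝ)/p) / (A' ^ (1/p - 1) - 1)) * L := by
  have hA0 : (0:ℝ) < A' := lt_trans one_pos hA'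
  have hα : 0 < 1/p - 1 := by
    have h1 : 1 < 1/p := by
      rw [lt_div_iff₀ hp]; linarith
    linarith
  have hx1 : 1 < A' ^ (1/p - 1) := (Real.one_lt_rpow_iff_of_pos hA0).2 (Or.inl ⟨hA', hα⟩)
  -- conjugate exponent facts
  have hq0 : q ≠ 0 := (zero_lt_one.trans_le hq).ne'
  have hq'1 : 1 ≤ q' := by
    rw [← ENNReal.inv_le_one, ← one_div]
    calc 1/q' ≤ 1/q + 1/q' := le_add_self
      _ = 1 := hqq'
  have hq'0 : q' ≠ 0 := (zero_lt_one.trans_le hq'1).ne'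
  have hss' : 1/q.toReal + 1/q'.toReal = 1 := by
    have h1 : 1/q ≠ ⊤ := by
      rw [one_div, Ne, ENNReal.inv_eq_top]; exact hq0
    have h2 : 1/q' ≠ ⊤ := by
      rw [one_div, Ne, ENNReal.inv_eq_top]; exact hq'0
    have h3 : (1/q + 1/q').toReal = (1/q).toReal + (1/q').toReal :=
      ENNReal.toReal_add h1 h2
    rw [hqq'] at h3
    rw [one_div, one_div, ENNReal.toReal_inv, ENNReal.toReal_inv, ← one_div, ← one_div] at h3
    rw [← h3, ENNReal.toReal_one]
  obtain ⟨x_B, r_B, hrB, hsupp, haq, haint, hamean⟩ := ha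
  set m := mloc d μ T f x_B r_B with hm
  have hρB0 : μ (hball d x_B r_B) ≠ 0 := (hX.pos x_B r_B hrB).ne'
  have hρBT : μ (hball d x_B r_B) ≠ ⊤ := (hX.fin x_B r_B).ne
  -- splitting of the integral
  have hsplit : ∫ x, a x * f x ∂μ = (∫ x, a x * (f x - m) ∂μ) + m * ∫ x, a x ∂μ := by
    have h1 : ∫ x, a x * (f x - m) ∂μ
        = (∫ x, a x * f x ∂μ) - ∫ x, a x * m ∂μ := by
      simp_rw [mul_sub]
      exact integral_sub haf (haint.mul_const m)
    rw [h1, integral_mul_const]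
    ring
  -- |∫ a (f - m)| ≤ L
  have key1 : |∫ x, a x * (f x - m) ∂μ| ≤ L := by
    set G : X → ℝ := fun y => (a y * f y) / (a y) - (a y * m) / (a y) with hG
    have hGm : AEStronglyMeasurable G μ :=
      ((haf.aestronglyMeasurable.aemeasurable.div
          haint.aestronglyMeasurable.aemeasurable).sub
        ((haint.mul_const m).aestronglyMeasurable.aemeasurable.div
          haint.aestronglyMeasurable.aemeasurable)).aestronglyMeasurable
    have hGeq : ∀ y, a y * (f y - m) = a y * G y := by
      intro y
      by_cases h : a y = 0
      · simp [hG, h]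
      · simp only [hG]
        field_simp
    have hGle : ∀ y, ‖G y‖ ≤ ‖f y - m‖ := by
      intro y
      by_cases h : a y = 0
      · simp [hG, h]
      · simp only [hG]
        have heq : a y * f y / a y - a y * m / a y = f y - m := by field_simp
        rw [heq]
    have hrw : (fun x => a x * (f x - m)) = fun x => a x * G x := funext hGeq
    have hlin : ∫⁻ y, ENNReal.ofReal ‖a y * G y‖ ∂μ ≤ ENNReal.ofReal L := by
      have hsupp' : (Function.support fun y => ENNReal.ofReal ‖a y * G y‖)
          ⊆ hball d x_B r_B := by
        intro y hy
        by_contra hmem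
        have h0 : a y = 0 := by
          by_contra h0
          exact hmem (hsupp y h0)
        simp [Function.mem_support, h0] at hy
      have h6 : ∫⁻ y, ENNReal.ofReal ‖a y * G y‖ ∂μ
          = ∫⁻ y in hball d x_B r_B, ENNReal.ofReal ‖a y * G y‖ ∂μ :=
        (setLIntegral_eq_of_support_subset hsupp').symm
      have h7 : ∫⁻ y in hball d x_B r_B, ENNReal.ofReal ‖a y * G y‖ ∂μ
          = eLpNorm (fun y => a y * G y) 1 (μ.restrict (hball d x_B r_B)) := by
        rw [eLpNorm_one_eq_lintegral_enorm]
        simp_rw [ofReal_norm]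
      have hpqr : (1:ℝ≥0∞)/1 = 1/q + 1/q' := by
        rw [hqq']; simp
      have h8 := eLpNorm_le_eLpNorm_mul_eLpNorm'_of_norm (μ := μ.restrict (hball d x_B r_B))
        (haint.aestronglyMeasurable.restrict) (hGm.restrict) (fun s t => s * t) 1
        (Eventually.of_forall fun y => by simp [norm_mul]) (hpqr := (⟨by simpa [one_div] using hqq'⟩ : ENNReal.HolderTriple q q' 1))
      rw [ENNReal.coe_one, one_mul] at h8
      have h9 : eLpNorm a q (μ.restrict (hball d x_B r_B)) ≤ eLpNorm a q μ :=
        eLpNorm_mono_measure _ Measure.restrict_le_self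
      have h10 : eLpNorm G q' (μ.restrict (hball d x_B r_B))
          ≤ eLpNorm (fun y => f y - m) q' (μ.restrict (hball d x_B r_B)) :=
        eLpNorm_mono hGle
      have hfB := hf x_B r_B hrB
      rw [← hm] at hfB
      have h11 : eLpNorm (fun y => a y * G y) 1 (μ.restrict (hball d x_B r_B))
          ≤ (μ (hball d x_B r_B) ^ (1/q.toReal - 1/p))
            * (ENNReal.ofReal L * μ (hball d x_B r_B) ^ ((1/p - 1) + 1/q'.toReal)) := by
        refine le_trans h8 ?_
        exact mul_le_mul' (h9.trans haq) (h10.trans hfB)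
      have h12 : (μ (hball d x_B r_B) ^ (1/q.toReal - 1/p))
            * (ENNReal.ofReal L * μ (hball d x_B r_B) ^ ((1/p - 1) + 1/q'.toReal))
          = ENNReal.ofReal L := by
        rw [mul_comm (ENNReal.ofReal L), ← mul_assoc, ← ENNReal.rpow_add _ _ hρB0 hρBT]
        rw [show (1/q.toReal - 1/p) + ((1/p - 1) + 1/q'.toReal) = 0 by linarith,
          ENNReal.rpow_zero, one_mul]
      rw [h6, h7]
      exact h11.trans (le_of_eq h12)
    rw [hrw, ← Real.norm_eq_abs]
    refine le_trans (norm_integral_le_lintegral_norm _) ?_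
    have := ENNReal.toReal_mono ENNReal.ofReal_ne_top hlin
    rwa [ENNReal.toReal_ofReal hL] at this
  -- bound on |m * ∫ a|
  have hDpos : 0 ≤ A' ^ ((2:ℝ)/p) / (A' ^ (1/p - 1) - 1) :=
    div_nonneg (Real.rpow_nonneg (le_of_lt hA0) _) (by linarith)
  have key2 : |m * ∫ x, a x ∂μ| ≤ (A' ^ ((2:ℝ)/p) / (A' ^ (1/p - 1) - 1)) * L := by
    by_cases hcase : r_B < T
    · -- m is the average over B
      have hvT : 0 < (μ (hball d x_B T)).toReal :=
        ENNReal.toReal_pos (hX.pos x_B T hT).ne' (hX.fin x_B T).ne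
      have hvr : 0 < (μ (hball d x_B r_B)).toReal :=
        ENNReal.toReal_pos hρB0 hρBT
      obtain ⟨n, hn⟩ := pow_unbounded_of_one_lt
        ((μ (hball d x_B T)).toReal / (A' ^ 2 * (μ (hball d x_B r_B)).toReal)) hA'
      have hnn : (μ (hball d x_B T)).toReal
          ≤ A' ^ n * (A' ^ 2 * (μ (hball d x_B r_B)).toReal) := by
        rw [div_lt_iff₀ (by positivity)] at hn
        linarith
      have hchain := chain_lemma hX hA' hα hq'1 hss' hL hf x_B hrB n T
        (le_of_lt hcase) le_rfl hnn
      have hmT : mloc d μ T f x_B T = 0 := by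
        unfold mloc
        exact if_neg (lt_irrefl T)
      have hmB : m = ⨍ y in hball d x_B r_B, f y ∂μ := by
        rw [hm]; unfold mloc; exact if_pos hcase
      rw [hmT, sub_zero, ← hmB] at hchain
      -- |m| ≤ K * vT^α
      set K := A' ^ 2 * (A' ^ (1/p-1) / (A' ^ (1/p-1) - 1)) * L with hK
      have hKnn : 0 ≤ K := by
        apply mul_nonneg (mul_nonneg (by positivity) _) hL
        exact div_nonneg (Real.rpow_nonneg (le_of_lt hA0) _) (by linarith)
      have hprod : |m * ∫ x, a x ∂μ| ≤ K := by
        rw [abs_mul]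
        calc |m| * |∫ x, a x ∂μ|
            ≤ (K * (μ (hball d x_B T)).toReal ^ (1/p-1))
              * ((μ (hball d x_B T)).toReal ^ (1 - 1/p)) := by
              apply mul_le_mul hchain hamean (abs_nonneg _)
              exact mul_nonneg hKnn (Real.rpow_nonneg ENNReal.toReal_nonneg _)
          _ = K := by
              rw [mul_assoc, ← Real.rpow_add hvT,
                show (1/p - 1) + (1 - 1/p) = 0 by ring, Real.rpow_zero, mul_one]
      refine le_trans hprod ?_
      -- K ≤ D * L
      have h2p : (2:ℝ) + (1/p - 1) ≤ (2:ℝ)/p := by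
        have : (2:ℝ)/p = 2 * (1/p) := by ring
        linarith
      have hA2α : A' ^ (2:ℕ) * A' ^ (1/p - 1) ≤ A' ^ ((2:ℝ)/p) := by
        have e : (A':ℝ) ^ (2:ℕ) = A' ^ ((2:ℕ):ℝ) := (Real.rpow_natCast A' 2).symm
        rw [e, ← Real.rpow_add hA0]
        apply (Real.rpow_le_rpow_left_iff hA').2
        push_cast
        linarith
      rw [hK]
      rw [show A' ^ 2 * (A' ^ (1/p-1) / (A' ^ (1/p-1) - 1)) * L
          = (A' ^ 2 * A' ^ (1/p-1)) / (A' ^ (1/p-1) - 1) * L by ring]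
      apply mul_le_mul_of_nonneg_right _ hL
      exact (div_le_div_iff_of_pos_right (by linarith)).2 hA2α
    · have hm0 : m = 0 := by
        rw [hm]; unfold mloc; exact if_neg hcase
      rw [hm0, zero_mul, abs_zero]
      exact mul_nonneg hDpos hL
  -- conclusion
  calc |∫ x, a x * f x ∂μ|
      ≤ |∫ x, a x * (f x - m) ∂μ| + |m * ∫ x, a x ∂μ| := by
        rw [hsplit]; exact abs_add_le _ _
    _ ≤ L + (A' ^ ((2:ℝ)/p) / (A' ^ (1/p - 1) - 1)) * L := add_le_add key1 key2
    _ = (1 + A' ^ ((2:ℝ)/p) / (A' ^ (1/p - 1) - 1)) * L := by ring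
end
end

section
/- Let (X,d,μ) be a space of homogeneous type, 0 < p < 1 ≤ q ≤ ∞, and M a (p,q,T,λ)-approximate molecule associated to a ball B with Σ_{k≥1} λ_k < ∞. Then M defines a continuous linear functional on ℓ_{1/p−1,T}(X): if r_B < T, then |∫ M φ dμ| ≤ C (1 + Σ_{k≥1} λ_k) ‖φ‖_{ℓ_{1/p−1,T}} for all φ ∈ ℓ_{1/p−1,T}(X), with C an absolute constant (C = 4 works). -/
open MeasureTheory ENNReal Filter Topology

noncomputable section

variable {X : Type*}

lemma holder_key [MeasurableSpace X] {μ : Measure X} {q : ℝ≥0∞} (hq : 1 ≤ q)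
    {M : X → ℝ} (hint : Integrable M μ) {S B : Set X} (hS : MeasurableSet S)
    (hSB : S ⊆ B) (hB0 : μ B ≠ 0) (hBt : μ B ≠ ⊤) {u c : ℝ} (hc : 0 ≤ c)
    (hbound : eLpNorm (S.indicator M) q μ ≤ ENNReal.ofReal c * μ B ^ (1/q.toReal - u)) :
    ∫ x in S, |M x| ∂μ ≤ c * (μ B).toReal ^ (1 - u) := by
  have hm : AEStronglyMeasurable M μ := hint.aestronglyMeasurable
  have key : eLpNorm M 1 (μ.restrict S) ≤ ENNReal.ofReal c * μ B ^ (1 - u) := by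
    have e1 : eLpNorm M 1 (μ.restrict S) = eLpNorm (S.indicator M) 1 (μ.restrict B) := by
      rw [eLpNorm_indicator_eq_eLpNorm_restrict hS, Measure.restrict_restrict hS,
        Set.inter_eq_left.mpr hSB]
    have e2 : eLpNorm (S.indicator M) 1 (μ.restrict B)
        ≤ eLpNorm (S.indicator M) q (μ.restrict B)
          * (μ.restrict B) Set.univ ^ (1/(1:ℝ≥0∞).toReal - 1/q.toReal) :=
      eLpNorm_le_eLpNorm_mul_rpow_measure_univ hq ((hm.indicator hS).restrict)
    have e3 : eLpNorm (S.indicator M) q (μ.restrict B) ≤ eLpNorm (S.indicator M) q μ :=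
      eLpNorm_mono_measure _ Measure.restrict_le_self
    rw [e1]
    calc eLpNorm (S.indicator M) 1 (μ.restrict B)
        ≤ (ENNReal.ofReal c * μ B ^ (1/q.toReal - u)) * μ B ^ (1 - 1/q.toReal) := by
          refine e2.trans ?_
          rw [Measure.restrict_apply_univ]
          have : (1/(1:ℝ≥0∞).toReal - 1/q.toReal) = (1 - 1/q.toReal) := by norm_num
          rw [this]
          exact mul_le_mul_left (e3.trans hbound) _
      _ = ENNReal.ofReal c * μ B ^ (1 - u) := by
          rw [mul_assoc, ← ENNReal.rpow_add _ _ hB0 hBt]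
          congr 1
          ring_nf
  have h4 : ENNReal.ofReal (∫ x in S, |M x| ∂μ) = eLpNorm M 1 (μ.restrict S) := by
    rw [eLpNorm_one_eq_lintegral_enorm, ← ofReal_integral_norm_eq_lintegral_enorm hint.restrict]
    simp [Real.norm_eq_abs]
  have hne : μ B ^ (1 - u) ≠ ⊤ := by
    rw [Ne, ENNReal.rpow_eq_top_iff]
    push_neg
    exact ⟨fun h => absurd h hB0, fun h => absurd h hBt⟩
  have h5 : ENNReal.ofReal c * μ B ^ (1 - u) = ENNReal.ofReal (c * (μ B).toReal ^ (1 - u)) := by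
    rw [ENNReal.ofReal_mul hc, ENNReal.toReal_rpow, ENNReal.ofReal_toReal hne]
  rw [h5, ← h4] at key
  exact (ENNReal.ofReal_le_ofReal_iff
    (mul_nonneg hc (Real.rpow_nonneg ENNReal.toReal_nonneg _))).1 key


set_option maxHeartbeats 2000000 in
/-- An approximate molecule defines a continuous linear functional on `ℓ_{1/p-1,T}(X)`. -/
theorem stmt9 [MeasurableSpace X] (d : X → X → ℝ) (μ : Measure X) (A₀ A' γ : ℝ)
    (hX : IsHomType d μ A₀ A' γ) (p : ℝ) (hp : 0 < p) (hp1 : p < 1)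
    (q : ℝ≥0∞) (hq : 1 ≤ q) (T : ℝ) (hT : 0 < T)
    (M : X → ℝ) (x_B : X) (r_B : ℝ) (hr : 0 < r_B) (hrT : r_B < T)
    (lam : ℕ → ℝ) (hl0 : ∀ k, 0 ≤ lam k) (hlsum : Summable lam)
    (h1 : eLpNorm ((hball d x_B r_B).indicator M) q μ
        ≤ μ (hball d x_B r_B) ^ (1/q.toReal - 1/p))
    (h2 : ∀ k : ℕ,
      eLpNorm ((hball d x_B (2^(k+1) * r_B) \ hball d x_B (2^k * r_B)).indicator M) q μ
        ≤ ENNReal.ofReal (lam (k+1)) * μ (hball d x_B (2^(k+1) * r_B)) ^ (1/q.toReal - 1/p))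
    (hint : Integrable M μ)
    (hmom : |∫ x, M x ∂μ| ≤ (μ (hball d x_B T)).toReal ^ (1 - 1/p))
    (φ : X → ℝ) (L : ℝ) (hL : 0 ≤ L) (hφ : LipBound d μ (1/p - 1) T φ L)
    (hMφ : Integrable (fun x => M x * φ x) μ) :
    |∫ x, M x * φ x ∂μ| ≤ 4 * (1 + ∑' k : ℕ, lam (k+1)) * L := by
  classical
  have hSnn : (0:ℝ) ≤ ∑' k : ℕ, lam (k+1) := tsum_nonneg fun k => hl0 _
  set Sl : ℝ := ∑' k : ℕ, lam (k+1) with hSl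
  have hlsum1 : Summable (fun k => lam (k+1)) := (summable_nat_add_iff 1).2 hlsum
  set Bs : ℕ → Set X := fun k => hball d x_B (2^k * r_B) with hBs
  have hrk : ∀ k : ℕ, (0:ℝ) < 2^k * r_B := fun k => mul_pos (pow_pos two_pos k) hr
  have hBmono : Monotone Bs := by
    intro i j hij y hy
    have hy' : d x_B y < 2^i * r_B := hy
    refine lt_of_lt_of_le hy' ?_
    exact mul_le_mul_of_nonneg_right (pow_le_pow_right₀ (one_le_two : (1:ℝ) ≤ 2) hij) hr.le
  have hBmeas : ∀ k, MeasurableSet (Bs k) := fun k => hX.meas _ _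
  have hμpos : ∀ k, μ (Bs k) ≠ 0 := fun k => (hX.pos _ _ (hrk k)).ne'
  have hμfin : ∀ k, μ (Bs k) ≠ ⊤ := fun k => (hX.fin _ _).ne
  set m : ℕ → ℝ := fun k => (μ (Bs k)).toReal with hm
  have hmpos : ∀ k, 0 < m k := fun k => ENNReal.toReal_pos (hμpos k) (hμfin k)
  set mT : ℝ := (μ (hball d x_B T)).toReal with hmT
  have hmTpos : 0 < mT := ENNReal.toReal_pos (hX.pos _ _ hT).ne' (hX.fin _ _).ne
  have hdxx : d x_B x_B = 0 := (hX.eq_zero x_B x_B).mpr rfl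
  have hxB : ∀ r : ℝ, 0 < r → x_B ∈ hball d x_B r := by
    intro r hr'
    show d x_B x_B < r
    rw [hdxx]; exact hr'
  set E : ℕ → Set X := disjointed Bs with hE
  have hEmeas : ∀ k, MeasurableSet (E k) := MeasurableSet.disjointed hBmeas
  have hEdisj : Pairwise (Function.onFun Disjoint E) := disjoint_disjointed Bs
  have hEsub : ∀ k, E k ⊆ Bs k := fun k => disjointed_le Bs k
  have hE0 : E 0 = Bs 0 := disjointed_zero Bs
  have hEsucc : ∀ k, E (k+1) = Bs (k+1) \ Bs k := fun k => by
    have h := hBmono.disjointed_succ (not_isMax k); rw [Order.succ_eq_add_one] at h; exact h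
  have hEunion : (⋃ k, E k) = Set.univ := by
    rw [hE, iUnion_disjointed]
    ext y
    simp only [Set.mem_iUnion, Set.mem_univ, iff_true]
    obtain ⟨n, hn⟩ := pow_unbounded_of_one_lt (d x_B y / r_B) (one_lt_two (α := ℝ))
    exact ⟨n, show d x_B y < _ from (div_lt_iff₀ hr).mp hn⟩
  set lam' : ℕ → ℝ := fun k => if k = 0 then 1 else lam k with hlam'
  have hlam'0 : ∀ k, 0 ≤ lam' k := by
    intro k; by_cases h : k = 0 <;> simp [hlam', h, hl0 k]
  -- annulus L¹ bounds
  have ha : ∀ k, ∫ x in E k, |M x| ∂μ ≤ lam' k * m k ^ (1 - 1/p) := by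
    intro k
    cases k with
    | zero =>
      have hb0 : Bs 0 = hball d x_B r_B := by
        rw [hBs]; norm_num
      have h1' : eLpNorm ((E 0).indicator M) q μ
          ≤ ENNReal.ofReal (lam' 0) * μ (Bs 0) ^ (1/q.toReal - 1/p) := by
        rw [hE0, hb0]
        simpa [hlam'] using h1
      exact holder_key hq hint (hEmeas 0) (hEsub 0) (hμpos 0) (hμfin 0) (by simp [hlam']) h1'
    | succ k =>
      have h2' : eLpNorm ((E (k+1)).indicator M) q μ
          ≤ ENNReal.ofReal (lam' (k+1)) * μ (Bs (k+1)) ^ (1/q.toReal - 1/p) := by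
        rw [hEsucc k]
        simpa [hlam', hBs] using h2 k
      exact holder_key hq hint (hEmeas _) (hEsub _) (hμpos _) (hμfin _) (hlam'0 _) h2'
  -- φ bounds
  have hφc : |φ x_B| ≤ L * mT ^ (1/p - 1) := (hφ x_B T hT).2 le_rfl x_B (hxB T hT)
  have hφosc : ∀ k, 2^k * r_B < T → ∀ y ∈ Bs k, |φ y - φ x_B| ≤ L * m k ^ (1/p-1) :=
    fun k hk y hy => (hφ x_B _ (hrk k)).1 hk y hy x_B (hxB _ (hrk k))
  have hφsup : ∀ k, T ≤ 2^k * r_B → ∀ y ∈ Bs k, |φ y| ≤ L * m k ^ (1/p-1) :=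
    fun k hk y hy => (hφ x_B _ (hrk k)).2 hk y hy
  -- generic bound
  have hgen : ∀ (k : ℕ) (ψ : X → ℝ), Integrable (fun x => M x * ψ x) μ →
      (∀ y ∈ Bs k, |ψ y| ≤ L * m k ^ (1/p - 1)) →
      |∫ x in E k, M x * ψ x ∂μ| ≤ L * lam' k := by
    intro k ψ hψint hψb
    have hC : 0 ≤ L * m k ^ (1/p - 1) := mul_nonneg hL (Real.rpow_nonneg (hmpos k).le _)
    have step1 : |∫ x in E k, M x * ψ x ∂μ| ≤ ∫ x in E k, |M x * ψ x| ∂μ := by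
      simpa only [Real.norm_eq_abs] using
        norm_integral_le_integral_norm (μ := μ.restrict (E k)) (f := fun x => M x * ψ x)
    have step2 : ∫ x in E k, |M x * ψ x| ∂μ
        ≤ ∫ x in E k, |M x| * (L * m k ^ (1/p-1)) ∂μ := by
      refine setIntegral_mono_on hψint.abs.integrableOn
        ((hint.abs.mul_const _).integrableOn) (hEmeas k) ?_
      intro x hx
      rw [abs_mul]
      exact mul_le_mul_of_nonneg_left (hψb x (hEsub k hx)) (abs_nonneg _)
    have step3 : ∫ x in E k, |M x| * (L * m k ^ (1/p-1)) ∂μ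
        = (∫ x in E k, |M x| ∂μ) * (L * m k ^ (1/p-1)) := integral_mul_const _ _
    have hexp : (1 - 1/p) + (1/p - 1) = 0 := by ring
    calc |∫ x in E k, M x * ψ x ∂μ| ≤ ∫ x in E k, |M x * ψ x| ∂μ := step1
      _ ≤ ∫ x in E k, |M x| * (L * m k ^ (1/p-1)) ∂μ := step2
      _ = (∫ x in E k, |M x| ∂μ) * (L * m k ^ (1/p-1)) := step3
      _ ≤ (lam' k * m k ^ (1 - 1/p)) * (L * m k ^ (1/p-1)) :=
          mul_le_mul_of_nonneg_right (ha k) hC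
      _ = L * lam' k * (m k ^ (1 - 1/p) * m k ^ (1/p-1)) := by ring
      _ = L * lam' k := by
          rw [← Real.rpow_add (hmpos k), hexp, Real.rpow_zero, mul_one]
  -- N : least index with T ≤ 2^N r_B
  have hexN : ∃ n : ℕ, T ≤ 2^n * r_B := by
    obtain ⟨n, hn⟩ := pow_unbounded_of_one_lt (T / r_B) (one_lt_two (α := ℝ))
    exact ⟨n, ((div_lt_iff₀ hr).mp hn).le⟩
  obtain ⟨N, hNspec, hNlt⟩ : ∃ N : ℕ, T ≤ 2^N * r_B ∧ ∀ k < N, 2^k * r_B < T :=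
    ⟨Nat.find hexN, Nat.find_spec hexN, fun k hk => lt_of_not_ge (Nat.find_min hexN hk)⟩
  have hN1 : 1 ≤ N := by
    by_contra h
    push_neg at h
    interval_cases N
    · simp at hNspec; linarith
  have hNsub : N - 1 + 1 = N := by omega
  have hge : ∀ k, N ≤ k → T ≤ 2^k * r_B := fun k hk =>
    hNspec.trans (mul_le_mul_of_nonneg_right (pow_le_pow_right₀ (one_le_two : (1:ℝ) ≤ 2) hk) hr.le)
  -- partial sums
  have hpartial : ∀ (f : X → ℝ), Integrable f μ → ∀ n : ℕ,
      ∑ k ∈ Finset.range (n+1), ∫ x in E k, f x ∂μ = ∫ x in Bs n, f x ∂μ := by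
    intro f hf n
    induction n with
    | zero => simp [hE0]
    | succ n ih =>
      rw [Finset.sum_range_succ, ih, hEsucc n]
      rw [← setIntegral_union disjoint_sdiff_self_right ((hBmeas (n+1)).diff (hBmeas n))
        hf.integrableOn hf.integrableOn, Set.union_diff_cancel (hBmono n.le_succ)]
  -- HasSum decompositions
  have hIsum : HasSum (fun k => ∫ x in E k, M x * φ x ∂μ) (∫ x, M x * φ x ∂μ) := by
    have h := hasSum_integral_iUnion hEmeas hEdisj
      (by rw [hEunion]; exact hMφ.integrableOn)
    rwa [hEunion, Measure.restrict_univ] at h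
  have hasum : HasSum (fun k => ∫ x in E k, |M x| ∂μ) (∫ x, |M x| ∂μ) := by
    have h := hasSum_integral_iUnion hEmeas hEdisj
      (by rw [hEunion]; exact hint.abs.integrableOn)
    rwa [hEunion, Measure.restrict_univ] at h
  have hMφasum : HasSum (fun k => ∫ x in E k, |M x * φ x| ∂μ) (∫ x, |M x * φ x| ∂μ) := by
    have h := hasSum_integral_iUnion hEmeas hEdisj
      (by rw [hEunion]; exact hMφ.abs.integrableOn)
    rwa [hEunion, Measure.restrict_univ] at h
  set I : ℕ → ℝ := fun k => ∫ x in E k, M x * φ x ∂μ with hI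
  have habs_sum : Summable (fun k => |I k|) := by
    refine Summable.of_nonneg_of_le (fun k => abs_nonneg _) (fun k => ?_) hMφasum.summable
    simpa only [Real.norm_eq_abs] using
      norm_integral_le_integral_norm (μ := μ.restrict (E k)) (f := fun x => M x * φ x)
  -- tail
  have htail_term : ∀ k, N ≤ k → |I k| ≤ L * lam k := by
    intro k hk
    have hk0 : k ≠ 0 := by omega
    have h := hgen k φ hMφ (hφsup k (hge k hk))
    have hlk : lam' k = lam k := by simp [hlam', hk0]
    rwa [hlk] at h
  have hshift : ∑' j : ℕ, lam (j + N) ≤ Sl := by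
    rw [hSl]
    exact Summable.tsum_le_tsum_of_inj (fun j => j + (N-1)) (add_left_injective _)
      (fun c _ => hl0 _)
      (fun j => le_of_eq (by show lam (j + N) = lam (j + (N-1) + 1); congr 1; omega))
      ((summable_nat_add_iff N).2 hlsum) hlsum1
  have htail : |∑' j : ℕ, I (j + N)| ≤ L * Sl := by
    have hsum1 : Summable fun j => |I (j + N)| := (summable_nat_add_iff N).2 habs_sum
    have h1' : |∑' j : ℕ, I (j + N)| ≤ ∑' j : ℕ, |I (j + N)| := by
      simpa only [Real.norm_eq_abs] using
        norm_tsum_le_tsum_norm (f := fun j => I (j + N))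
          (by simpa only [Real.norm_eq_abs] using hsum1)
    refine h1'.trans ?_
    have h2' : ∑' j : ℕ, |I (j + N)| ≤ ∑' j : ℕ, L * lam (j + N) :=
      Summable.tsum_le_tsum (fun j => htail_term _ (Nat.le_add_left N j)) hsum1
        (((summable_nat_add_iff N).2 hlsum).mul_left L)
    refine h2'.trans ?_
    rw [tsum_mul_left]
    exact mul_le_mul_of_nonneg_left hshift hL
  -- head
  have hDbound : ∀ k < N, |∫ x in E k, M x * (φ x - φ x_B) ∂μ| ≤ L * lam' k := by
    intro k hk
    have hintg : Integrable (fun x => M x * (φ x - φ x_B)) μ := by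
      have h := hMφ.sub (hint.mul_const (φ x_B))
      simpa [mul_sub, Pi.sub_def] using h
    exact hgen k (fun x => φ x - φ x_B) hintg (hφosc k (hNlt k hk))
  have hsumlam' : ∑ k ∈ Finset.range N, lam' k ≤ 1 + Sl := by
    rw [← hNsub, Finset.sum_range_succ']
    have h0 : lam' 0 = 1 := by simp [hlam']
    have hrest : ∑ i ∈ Finset.range (N-1), lam' (i+1) ≤ Sl := by
      have : ∀ i, lam' (i+1) = lam (i+1) := fun i => by simp [hlam']
      rw [Finset.sum_congr rfl fun i _ => this i]
      exact Summable.sum_le_tsum (Finset.range (N-1)) (fun i _ => hl0 _) hlsum1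
    rw [h0]
    linarith
  have hIdec : ∀ k, I k = (∫ x in E k, M x * (φ x - φ x_B) ∂μ)
      + (∫ x in E k, M x ∂μ) * φ x_B := by
    intro k
    have hintg : Integrable (fun x => M x * (φ x - φ x_B)) μ := by
      have h := hMφ.sub (hint.mul_const (φ x_B))
      simpa [mul_sub, Pi.sub_def] using h
    rw [← integral_mul_const,
      ← integral_add hintg.integrableOn ((hint.mul_const _).integrableOn)]
    apply setIntegral_congr_fun (hEmeas k)
    intro x _
    ring
  -- bound on |∫_{Bs (N-1)} M|
  have hexp2 : (1 - 1/p) + (1/p - 1) = 0 := by ring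
  have hBNbound : |∫ x in Bs (N-1), M x ∂μ| ≤ mT ^ (1 - 1/p) * (1 + Sl) := by
    have hsplit : ∫ x in Bs (N-1), M x ∂μ
        = (∫ x, M x ∂μ) - ∫ x in (Bs (N-1))ᶜ, M x ∂μ := by
      have h := integral_add_compl (hBmeas (N-1)) hint
      linarith
    have hcomp_abs : |∫ x in (Bs (N-1))ᶜ, M x ∂μ| ≤ ∫ x in (Bs (N-1))ᶜ, |M x| ∂μ := by
      simpa only [Real.norm_eq_abs] using
        norm_integral_le_integral_norm (μ := μ.restrict (Bs (N-1))ᶜ) (f := M)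
    have hcomp_eq : ∫ x in (Bs (N-1))ᶜ, |M x| ∂μ
        = ∑' j : ℕ, ∫ x in E (j + N), |M x| ∂μ := by
      have h₁ := integral_add_compl (hBmeas (N-1)) hint.abs
      have h₂ := hpartial (fun x => |M x|) hint.abs (N-1)
      have h₃ := Summable.sum_add_tsum_nat_add (f := fun k => ∫ x in E k, |M x| ∂μ) N hasum.summable
      rw [hasum.tsum_eq] at h₃
      rw [hNsub] at h₂
      beta_reduce at h₂ h₃ ⊢
      linarith
    have hterm : ∀ j : ℕ, ∫ x in E (j + N), |M x| ∂μ ≤ lam (j + N) * mT ^ (1 - 1/p) := by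
      intro j
      have hmle : mT ≤ m (j + N) := by
        have hsub : hball d x_B T ⊆ Bs (j + N) := by
          intro y hy
          exact lt_of_lt_of_le hy (hge (j+N) (Nat.le_add_left N j))
        exact ENNReal.toReal_mono (hμfin _) (measure_mono hsub)
      have hrp : m (j + N) ^ (1 - 1/p) ≤ mT ^ (1 - 1/p) := by
        refine Real.rpow_le_rpow_of_nonpos hmTpos hmle ?_
        have : 1 < 1/p := by rw [lt_div_iff₀ hp]; linarith
        linarith
      have hk0 : (j + N) ≠ 0 := by omega
      have h := ha (j + N)
      have hlk : lam' (j + N) = lam (j + N) := by simp only [hlam', hk0, if_false]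
      rw [hlk] at h
      calc ∫ x in E (j + N), |M x| ∂μ ≤ lam (j + N) * m (j + N) ^ (1 - 1/p) := h
        _ ≤ lam (j + N) * mT ^ (1 - 1/p) :=
            mul_le_mul_of_nonneg_left hrp (hl0 _)
    have hsumm_a : Summable (fun j : ℕ => ∫ x in E (j + N), |M x| ∂μ) :=
      (summable_nat_add_iff N).2 hasum.summable
    have hcomp_le : ∫ x in (Bs (N-1))ᶜ, |M x| ∂μ ≤ Sl * mT ^ (1 - 1/p) := by
      rw [hcomp_eq]
      calc ∑' j : ℕ, ∫ x in E (j + N), |M x| ∂μ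
          ≤ ∑' j : ℕ, lam (j + N) * mT ^ (1 - 1/p) :=
            Summable.tsum_le_tsum hterm hsumm_a
              (((summable_nat_add_iff N).2 hlsum).mul_right _)
        _ = (∑' j : ℕ, lam (j + N)) * mT ^ (1 - 1/p) := tsum_mul_right
        _ ≤ Sl * mT ^ (1 - 1/p) :=
            mul_le_mul_of_nonneg_right hshift (Real.rpow_nonneg hmTpos.le _)
    rw [hsplit]
    calc |(∫ x, M x ∂μ) - ∫ x in (Bs (N-1))ᶜ, M x ∂μ|
        ≤ |∫ x, M x ∂μ| + |∫ x in (Bs (N-1))ᶜ, M x ∂μ| := abs_sub _ _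
      _ ≤ mT ^ (1 - 1/p) + Sl * mT ^ (1 - 1/p) := by
          have := hcomp_abs.trans hcomp_le
          exact add_le_add hmom this
      _ = mT ^ (1 - 1/p) * (1 + Sl) := by ring
  -- head bound
  have hGsum : ∑ k ∈ Finset.range N, ∫ x in E k, M x ∂μ = ∫ x in Bs (N-1), M x ∂μ := by
    rw [← hNsub]
    exact hpartial M hint (N-1)
  have hhead : |∑ k ∈ Finset.range N, I k| ≤ 2 * (L * (1 + Sl)) := by
    have hsum_eq : ∑ k ∈ Finset.range N, I k
        = (∑ k ∈ Finset.range N, ∫ x in E k, M x * (φ x - φ x_B) ∂μ)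
          + (∫ x in Bs (N-1), M x ∂μ) * φ x_B := by
      rw [← hGsum, Finset.sum_mul, ← Finset.sum_add_distrib]
      exact Finset.sum_congr rfl fun k _ => hIdec k
    rw [hsum_eq]
    have hpart1 : |∑ k ∈ Finset.range N, ∫ x in E k, M x * (φ x - φ x_B) ∂μ|
        ≤ L * (1 + Sl) := by
      calc |∑ k ∈ Finset.range N, ∫ x in E k, M x * (φ x - φ x_B) ∂μ|
          ≤ ∑ k ∈ Finset.range N, |∫ x in E k, M x * (φ x - φ x_B) ∂μ| :=
            Finset.abs_sum_le_sum_abs _ _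
        _ ≤ ∑ k ∈ Finset.range N, L * lam' k :=
            Finset.sum_le_sum fun k hk => hDbound k (Finset.mem_range.mp hk)
        _ = L * ∑ k ∈ Finset.range N, lam' k := by rw [Finset.mul_sum]
        _ ≤ L * (1 + Sl) := mul_le_mul_of_nonneg_left hsumlam' hL
    have hpart2 : |(∫ x in Bs (N-1), M x ∂μ) * φ x_B| ≤ L * (1 + Sl) := by
      rw [abs_mul]
      calc |∫ x in Bs (N-1), M x ∂μ| * |φ x_B|
          ≤ (mT ^ (1 - 1/p) * (1 + Sl)) * (L * mT ^ (1/p - 1)) :=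
            mul_le_mul hBNbound hφc (abs_nonneg _)
              (mul_nonneg (Real.rpow_nonneg hmTpos.le _) (by linarith))
        _ = L * (1 + Sl) * (mT ^ (1 - 1/p) * mT ^ (1/p - 1)) := by ring
        _ = L * (1 + Sl) := by
            rw [← Real.rpow_add hmTpos, hexp2, Real.rpow_zero, mul_one]
    calc |(∑ k ∈ Finset.range N, ∫ x in E k, M x * (φ x - φ x_B) ∂μ)
          + (∫ x in Bs (N-1), M x ∂μ) * φ x_B|
        ≤ |∑ k ∈ Finset.range N, ∫ x in E k, M x * (φ x - φ x_B) ∂μ|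
          + |(∫ x in Bs (N-1), M x ∂μ) * φ x_B| := abs_add_le _ _
      _ ≤ L * (1 + Sl) + L * (1 + Sl) := add_le_add hpart1 hpart2
      _ = 2 * (L * (1 + Sl)) := by ring
  -- conclusion
  have hfull : ∑ k ∈ Finset.range N, I k + ∑' j : ℕ, I (j + N) = ∫ x, M x * φ x ∂μ := by
    rw [Summable.sum_add_tsum_nat_add N hIsum.summable, hIsum.tsum_eq]
  calc |∫ x, M x * φ x ∂μ|
      = |∑ k ∈ Finset.range N, I k + ∑' j : ℕ, I (j + N)| := by rw [hfull]
    _ ≤ |∑ k ∈ Finset.range N, I k| + |∑' j : ℕ, I (j + N)| := abs_add_le _ _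
    _ ≤ 2 * (L * (1 + Sl)) + L * Sl := add_le_add hhead htail
    _ ≤ 4 * (1 + Sl) * L := by nlinarith [mul_nonneg hL hSnn]
end
end

section
/- Let (X,d,μ) be a space of homogeneous type with upper dimension γ and φ ∈ 𝒢(β,θ) a test function of type (x₀,1,β,θ). For any ball B(x_B,r_B) with r_B ≥ 1 one has |φ(x)| ≤ C ‖φ‖_{𝒢(β,θ)} |B(x_B,r_B)|^{θ/γ} for all x ∈ B(x_B,r_B), with C independent of φ, x_B and r_B. Consequently, any φ ∈ 𝒢(β,β) lies in the local Lipschitz space ℓ_{β/γ,1}(X) with ‖φ‖_{ℓ_{β/γ,1}} ≤ C ‖φ‖_{𝒢(β,β)}. -/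
open MeasureTheory ENNReal Filter Topology

noncomputable section

variable {X : Type*}

/-- `Cφ` is an admissible constant for `φ` as a test function of type `(x₀,r,β,θ)`. -/
def TestFnBound [MeasurableSpace X] (d : X → X → ℝ) (μ : Measure X) (A₀ : ℝ)
    (x₀ : X) (r β θ : ℝ) (φ : X → ℝ) (Cφ : ℝ) : Prop :=
  (∀ x, |φ x| ≤ Cφ * ((μ (hball d x₀ r) + μ (hball d x₀ (d x₀ x))).toReal)⁻¹ *
      (r / (r + d x₀ x)) ^ θ) ∧
  (∀ x y, d x y ≤ (2*A₀)⁻¹ * (r + d x₀ x) →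
    |φ x - φ y| ≤ Cφ * ((μ (hball d x₀ r) + μ (hball d x₀ (d x₀ x))).toReal)⁻¹ *
      (d x y / (r + d x₀ x)) ^ β * (r / (r + d x₀ x)) ^ θ)


private lemma hball_subset'' [MeasurableSpace X] {d : X → X → ℝ} {μ : Measure X}
    {A₀ A' γ : ℝ} (hX : IsHomType d μ A₀ A' γ) (x x' : X) {r s : ℝ}
    (h : A₀ * (d x' x + r) ≤ s) : hball d x r ⊆ hball d x' s := by
  intro y hy
  have hy' : d x y < r := hy
  have hA : (0:ℝ) < A₀ := lt_of_lt_of_le one_pos hX.A0_ge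
  have h1 : d x' y ≤ A₀ * (d x' x + d x y) := hX.tri x' y x
  have h2 : A₀ * (d x' x + d x y) < A₀ * (d x' x + r) := by nlinarith
  show d x' y < s
  linarith

private lemma cmp' [MeasurableSpace X] {d : X → X → ℝ} {μ : Measure X}
    {A₀ A' γ : ℝ} (hX : IsHomType d μ A₀ A' γ) (x x' : X) {r s lam : ℝ}
    (hlam : 1 ≤ lam) (h : A₀ * (d x' x + r) ≤ lam * s) :
    (μ (hball d x r)).toReal ≤ A' * lam ^ γ * (μ (hball d x' s)).toReal := by
  have h1 : μ (hball d x r) ≤ μ (hball d x' (lam * s)) :=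
    measure_mono (hball_subset'' hX x x' h)
  have hc : 0 ≤ A' * lam ^ γ :=
    mul_nonneg hX.A'_pos.le (Real.rpow_nonneg (by linarith) γ)
  have h3 : μ (hball d x r) ≤ ENNReal.ofReal (A' * lam ^ γ) * μ (hball d x' s) :=
    h1.trans (hX.doubling x' s lam hlam)
  have hfin : ENNReal.ofReal (A' * lam ^ γ) * μ (hball d x' s) ≠ ⊤ :=
    ENNReal.mul_ne_top ENNReal.ofReal_ne_top (hX.fin x' s).ne
  calc (μ (hball d x r)).toReal
      ≤ (ENNReal.ofReal (A' * lam ^ γ) * μ (hball d x' s)).toReal :=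
        ENNReal.toReal_mono hfin h3
    _ = A' * lam ^ γ * (μ (hball d x' s)).toReal := by
        rw [ENNReal.toReal_mul, ENNReal.toReal_ofReal hc]

private lemma rpow_div_trick {a b e g : ℝ} (ha : 0 ≤ a) (hb : 0 ≤ b) (hg : 0 < g)
    (he : 0 ≤ e) (h : a ^ g ≤ b) : a ^ e ≤ b ^ (e / g) := by
  have h1 : a ^ e = (a ^ g) ^ (e / g) := by
    rw [← Real.rpow_mul ha]
    congr 1
    field_simp
  rw [h1]
  exact Real.rpow_le_rpow (Real.rpow_nonneg ha _) h (by positivity)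

set_option maxHeartbeats 2000000 in
/-- Size estimate for test functions on large balls, and the resulting embedding
`𝒢(β,β) ⊆ ℓ_{β/γ,1}(X)`. -/
theorem stmt13 [MeasurableSpace X] (d : X → X → ℝ) (μ : Measure X) (A₀ A' γ : ℝ)
    (hX : IsHomType d μ A₀ A' γ) (x₀ : X) (β θ : ℝ)
    (hβ : 0 < β) (hβ1 : β ≤ 1) (hθ : 0 < θ) :
    ∃ C : ℝ, 0 < C ∧ ∀ (φ : X → ℝ) (Cφ : ℝ), 0 ≤ Cφ →
      TestFnBound d μ A₀ x₀ 1 β θ φ Cφ →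
      (∀ (x_B : X) (r_B : ℝ), 1 ≤ r_B → ∀ x ∈ hball d x_B r_B,
          |φ x| ≤ C * Cφ * (μ (hball d x_B r_B)).toReal ^ (θ/γ)) ∧
      (θ = β → LipBound d μ (β/γ) 1 φ (C * Cφ)) := by
  have hA0 : (1:ℝ) ≤ A₀ := hX.A0_ge
  have hA0p : (0:ℝ) < A₀ := lt_of_lt_of_le one_pos hA0
  have hA0sq : (1:ℝ) ≤ A₀ * A₀ := by nlinarith
  have hA2 : (0:ℝ) < 2*A₀*A₀ := by nlinarith
  have hA4 : (0:ℝ) < 4*A₀*A₀ := by nlinarith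
  have hA8 : (0:ℝ) < 8*A₀*A₀*A₀ := by nlinarith
  have hA'p := hX.A'_pos
  have hγ := hX.gamma_pos
  set m := (μ (hball d x₀ 1)).toReal with hm_def
  have hm : 0 < m := ENNReal.toReal_pos (hX.pos x₀ 1 one_pos).ne' (hX.fin x₀ 1).ne
  set c₀ : ℝ := A' * (2*A₀*A₀) ^ γ with hc₀
  have hc₀p : 0 < c₀ := by
    rw [hc₀]; exact mul_pos hA'p (Real.rpow_pos_of_pos hA2 γ)
  set c₁ : ℝ := A' * A₀ ^ γ with hc₁
  have hc₁p : 0 < c₁ := by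
    rw [hc₁]; exact mul_pos hA'p (Real.rpow_pos_of_pos hA0p γ)
  set K₁ : ℝ := m⁻¹ * (c₀/m) ^ (θ/γ) with hK₁
  have hK₁p : 0 < K₁ := by
    rw [hK₁]
    exact mul_pos (inv_pos.mpr hm) (Real.rpow_pos_of_pos (div_pos hc₀p hm) _)
  set K₂ : ℝ := ((4*A₀*A₀) ^ β + 2*(8*A₀*A₀*A₀) ^ β) * m⁻¹ * (c₁/m) ^ (β/γ) with hK₂
  have hK₂p : 0 < K₂ := by
    rw [hK₂]
    have h1 : (0:ℝ) < (4*A₀*A₀) ^ β := Real.rpow_pos_of_pos hA4 β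
    have h2 : (0:ℝ) < (8*A₀*A₀*A₀) ^ β := Real.rpow_pos_of_pos hA8 β
    exact mul_pos (mul_pos (by linarith) (inv_pos.mpr hm))
      (Real.rpow_pos_of_pos (div_pos hc₁p hm) _)
  refine ⟨K₁ + K₂, by linarith, ?_⟩
  intro φ Cφ hCφ hφ
  have hsum : ∀ x : X, ((μ (hball d x₀ 1) + μ (hball d x₀ (d x₀ x))).toReal)⁻¹ ≤ m⁻¹ := by
    intro x
    have h1 : m ≤ (μ (hball d x₀ 1) + μ (hball d x₀ (d x₀ x))).toReal := by
      rw [ENNReal.toReal_add (hX.fin _ _).ne (hX.fin _ _).ne]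
      have h2 : (0:ℝ) ≤ (μ (hball d x₀ (d x₀ x))).toReal := ENNReal.toReal_nonneg
      rw [← hm_def]
      linarith
    exact inv_anti₀ hm h1
  have size : ∀ (x_B : X) (r_B : ℝ), 1 ≤ r_B → ∀ x ∈ hball d x_B r_B,
      |φ x| ≤ K₁ * Cφ * (μ (hball d x_B r_B)).toReal ^ (θ/γ) := by
    intro x_B r_B hr x hx
    have hx' : d x_B x < r_B := hx
    have hdx : 0 ≤ d x₀ x := hX.nonneg x₀ x
    have hdbx : 0 ≤ d x_B x := hX.nonneg x_B x
    set u : ℝ := 1 + d x₀ x with hu_def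
    have hu1 : 1 ≤ u := by rw [hu_def]; linarith
    have hu0 : 0 < u := by linarith
    set M := (μ (hball d x_B r_B)).toReal with hM_def
    have hM : 0 < M :=
      ENNReal.toReal_pos (hX.pos _ _ (by linarith)).ne' (hX.fin _ _).ne
    have hb : m ≤ A' * (2*A₀*A₀*u) ^ γ * M := by
      apply cmp' hX x₀ x_B (lam := 2*A₀*A₀*u)
      · have h0 : (1:ℝ)*1 ≤ (A₀*A₀)*u := mul_le_mul hA0sq hu1 zero_le_one (by linarith)
        have h0' : (0:ℝ) ≤ (A₀*A₀)*u := by linarith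
        linarith
      · have h1 : d x_B x₀ ≤ A₀ * (d x_B x + d x x₀) := hX.tri x_B x₀ x
        rw [hX.symm x x₀] at h1
        rw [hu_def]
        nlinarith [mul_le_mul_of_nonneg_left h1 hA0p.le,
          mul_le_mul_of_nonneg_left hx'.le (mul_pos hA0p hA0p).le,
          mul_nonneg (mul_nonneg (mul_pos hA0p hA0p).le hdx)
            (by linarith : (0:ℝ) ≤ 2*r_B - 1),
          mul_nonneg hA0p.le (by nlinarith : (0:ℝ) ≤ A₀*r_B - 1)]
    have hb2 : m ≤ c₀ * u ^ γ * M := by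
      have h1 : (2*A₀*A₀*u) ^ γ = (2*A₀*A₀) ^ γ * u ^ γ :=
        Real.mul_rpow hA2.le hu0.le
      rw [h1] at hb
      rw [hc₀]
      linarith [hb]
    have hinvγ : (u⁻¹) ^ γ ≤ c₀ * M / m := by
      rw [Real.inv_rpow hu0.le]
      have h6 : m / (c₀ * M) ≤ u ^ γ := by
        rw [div_le_iff₀ (mul_pos hc₀p hM)]
        linarith [hb2]
      have h7 : (u ^ γ)⁻¹ ≤ (m / (c₀ * M))⁻¹ :=
        inv_anti₀ (div_pos hm (mul_pos hc₀p hM)) h6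
      rwa [inv_div] at h7
    have hθγ : (u⁻¹) ^ θ ≤ (c₀/m) ^ (θ/γ) * M ^ (θ/γ) := by
      have h8 := rpow_div_trick (inv_nonneg.mpr hu0.le)
        (le_of_lt (div_pos (mul_pos hc₀p hM) hm)) hγ hθ.le hinvγ
      calc (u⁻¹) ^ θ ≤ (c₀ * M / m) ^ (θ/γ) := h8
        _ = (c₀/m * M) ^ (θ/γ) := by congr 1; ring
        _ = (c₀/m) ^ (θ/γ) * M ^ (θ/γ) :=
            Real.mul_rpow (le_of_lt (div_pos hc₀p hm)) hM.le
    have ha := hφ.1 x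
    have huq : (1 / (1 + d x₀ x)) ^ θ = (u⁻¹) ^ θ := by rw [one_div, hu_def]
    rw [huq] at ha
    calc |φ x| ≤ Cφ * ((μ (hball d x₀ 1) + μ (hball d x₀ (d x₀ x))).toReal)⁻¹ *
        (u⁻¹) ^ θ := ha
      _ ≤ Cφ * m⁻¹ * ((c₀/m) ^ (θ/γ) * M ^ (θ/γ)) := by
          apply mul_le_mul
          · exact mul_le_mul_of_nonneg_left (hsum x) hCφ
          · exact hθγ
          · exact Real.rpow_nonneg (inv_nonneg.mpr hu0.le) θ
          · exact mul_nonneg hCφ (inv_nonneg.mpr hm.le)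
      _ = K₁ * Cφ * M ^ (θ/γ) := by rw [hK₁]; ring
  constructor
  · intro x_B r_B hr x hx
    refine (size x_B r_B hr x hx).trans ?_
    apply mul_le_mul_of_nonneg_right _ (Real.rpow_nonneg ENNReal.toReal_nonneg _)
    exact mul_le_mul_of_nonneg_right (by linarith) hCφ
  · intro hθβ
    subst hθβ
    intro x r hr0
    constructor
    · intro hr1 y hy z hz
      have hy' : d x y < r := hy
      have hz' : d x z < r := hz
      have hdx : 0 ≤ d x₀ x := hX.nonneg x₀ x
      have hdy : 0 ≤ d x₀ y := hX.nonneg x₀ y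
      have hdz : 0 ≤ d x₀ z := hX.nonneg x₀ z
      have hdxy : 0 ≤ d x y := hX.nonneg x y
      have hdxz : 0 ≤ d x z := hX.nonneg x z
      set u : ℝ := 1 + d x₀ x with hu_def
      have hu0 : 0 < u := by rw [hu_def]; linarith
      have hu1 : 1 ≤ u := by rw [hu_def]; linarith
      set v : ℝ := 1 + d x₀ y with hv_def
      have hv0 : 0 < v := by rw [hv_def]; linarith
      have hv1 : 1 ≤ v := by rw [hv_def]; linarith
      set M := (μ (hball d x r)).toReal with hM_def
      have hM : 0 < M := ENNReal.toReal_pos (hX.pos _ _ hr0).ne' (hX.fin _ _).ne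
      set w : ℝ := r / u with hw_def
      have hw0 : 0 < w := div_pos hr0 hu0
      have hL : m ≤ A' * (A₀ * u / r) ^ γ * M := by
        apply cmp' hX x₀ x (lam := A₀ * u / r)
        · rw [le_div_iff₀ hr0]
          have h0 : (1:ℝ)*r ≤ A₀*u := by
            have := mul_le_mul hA0 hu1 zero_le_one hA0p.le
            linarith
          linarith
        · rw [div_mul_cancel₀ _ hr0.ne', hX.symm x x₀, hu_def]
          exact le_of_eq (by ring)
      have hwγ : w ^ γ ≤ c₁ * M / m := by
        have hrγ : 0 < r ^ γ := Real.rpow_pos_of_pos hr0 γ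
        have huγ : 0 < u ^ γ := Real.rpow_pos_of_pos hu0 γ
        have h1 : (A₀ * u / r) ^ γ = A₀ ^ γ * u ^ γ / r ^ γ := by
          rw [Real.div_rpow (by positivity) hr0.le, Real.mul_rpow hA0p.le hu0.le]
        rw [h1] at hL
        have h3 : m * r ^ γ ≤ A' * A₀ ^ γ * u ^ γ * M := by
          have h4 := mul_le_mul_of_nonneg_right hL hrγ.le
          calc m * r ^ γ ≤ A' * (A₀ ^ γ * u ^ γ / r ^ γ) * M * r ^ γ := h4
            _ = A' * A₀ ^ γ * u ^ γ * M * (r ^ γ / r ^ γ) := by ring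
            _ = A' * A₀ ^ γ * u ^ γ * M := by rw [div_self hrγ.ne', mul_one]
        have h2 : w ^ γ = r ^ γ / u ^ γ := by
          rw [hw_def, Real.div_rpow hr0.le hu0.le]
        rw [h2, div_le_div_iff₀ huγ hm, hc₁]
        linarith [h3]
      have hwβ : w ^ θ ≤ (c₁/m) ^ (θ/γ) * M ^ (θ/γ) := by
        have h8 := rpow_div_trick hw0.le
          (le_of_lt (div_pos (mul_pos hc₁p hM) hm)) hγ hθ.le hwγ
        calc w ^ θ ≤ (c₁ * M / m) ^ (θ/γ) := h8
          _ = (c₁/m * M) ^ (θ/γ) := by congr 1; ring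
          _ = (c₁/m) ^ (θ/γ) * M ^ (θ/γ) :=
              Real.mul_rpow (le_of_lt (div_pos hc₁p hm)) hM.le
      have hdyz0 : 0 ≤ d y z := hX.nonneg y z
      have hdyz : d y z ≤ 2*A₀*r := by
        have h1 : d y z ≤ A₀ * (d y x + d x z) := hX.tri y z x
        have h3 : A₀ * (d y x + d x z) ≤ A₀ * (r + r) := by
          apply mul_le_mul_of_nonneg_left _ hA0p.le
          rw [hX.symm y x]
          linarith
        calc d y z ≤ A₀ * (d y x + d x z) := h1
          _ ≤ A₀ * (r + r) := h3
          _ = 2*A₀*r := by ring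
      have huv : u ≤ 2*A₀*v := by
        have h1 : d x₀ x ≤ A₀ * (d x₀ y + d y x) := hX.tri x₀ x y
        rw [hX.symm y x] at h1
        have h4 : d x₀ x ≤ A₀ * (d x₀ y + 1) := by
          refine h1.trans (mul_le_mul_of_nonneg_left (by linarith) hA0p.le)
        have h5 : 0 ≤ A₀ * d x₀ y := mul_nonneg hA0p.le hdy
        show 1 + d x₀ x ≤ 2*A₀*(1 + d x₀ y)
        linarith [h4, h5]
      have hkey : |φ y - φ z| ≤
          ((4*A₀*A₀) ^ θ + 2*(8*A₀*A₀*A₀) ^ θ) * (Cφ * m⁻¹ * w ^ θ) := by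
        have hc4 : (0:ℝ) ≤ (4*A₀*A₀) ^ θ := Real.rpow_nonneg hA4.le θ
        have hc8 : (0:ℝ) ≤ (8*A₀*A₀*A₀) ^ θ := Real.rpow_nonneg hA8.le θ
        have hCm : 0 ≤ Cφ * m⁻¹ * w ^ θ :=
          mul_nonneg (mul_nonneg hCφ (inv_nonneg.mpr hm.le)) (Real.rpow_nonneg hw0.le θ)
        by_cases hcase : d y z ≤ (2*A₀)⁻¹ * (1 + d x₀ y)
        · have h2 := hφ.2 y z hcase
          have hfrac : d y z / (1 + d x₀ y) ≤ 4*A₀*A₀*w := by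
            rw [← hv_def, hw_def, mul_div_assoc' (4*A₀*A₀), div_le_div_iff₀ hv0 hu0]
            have h6 : d y z * u ≤ (2*A₀*r) * (2*A₀*v) :=
              mul_le_mul hdyz huv hu0.le (by linarith)
            linarith [h6]
          have hfracβ : (d y z / (1 + d x₀ y)) ^ θ ≤ (4*A₀*A₀) ^ θ * w ^ θ := by
            have hstep : (d y z / (1 + d x₀ y)) ^ θ ≤ (4*A₀*A₀*w) ^ θ := by
              apply Real.rpow_le_rpow _ hfrac hθ.le
              rw [← hv_def]
              exact div_nonneg hdyz0 hv0.le
            calc (d y z / (1 + d x₀ y)) ^ θ ≤ (4*A₀*A₀*w) ^ θ := hstep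
              _ = (4*A₀*A₀) ^ θ * w ^ θ := Real.mul_rpow hA4.le hw0.le
          have honeθ : (1 / (1 + d x₀ y)) ^ θ ≤ 1 := by
            apply Real.rpow_le_one (div_nonneg zero_le_one (by linarith)) _ hθ.le
            rw [div_le_one (by linarith : (0:ℝ) < 1 + d x₀ y)]
            linarith
          calc |φ y - φ z| ≤ Cφ *
              ((μ (hball d x₀ 1) + μ (hball d x₀ (d x₀ y))).toReal)⁻¹ *
              (d y z / (1 + d x₀ y)) ^ θ * (1 / (1 + d x₀ y)) ^ θ := h2
            _ ≤ Cφ * m⁻¹ * ((4*A₀*A₀) ^ θ * w ^ θ) * 1 := by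
                apply mul_le_mul _ honeθ
                  (Real.rpow_nonneg (div_nonneg zero_le_one (by linarith)) θ)
                · exact mul_nonneg (mul_nonneg hCφ (inv_nonneg.mpr hm.le))
                    (mul_nonneg hc4 (Real.rpow_nonneg hw0.le θ))
                · apply mul_le_mul _ hfracβ
                    (Real.rpow_nonneg (div_nonneg hdyz0 (by linarith)) θ)
                    (mul_nonneg hCφ (inv_nonneg.mpr hm.le))
                  exact mul_le_mul_of_nonneg_left (hsum y) hCφ
            _ = (4*A₀*A₀) ^ θ * (Cφ * m⁻¹ * w ^ θ) := by ring
            _ ≤ ((4*A₀*A₀) ^ θ + 2*(8*A₀*A₀*A₀) ^ θ) * (Cφ * m⁻¹ * w ^ θ) := by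
                apply mul_le_mul_of_nonneg_right _ hCm
                linarith
        · push_neg at hcase
          rw [← hv_def] at hcase
          have h2A : (0:ℝ) < 2*A₀ := by linarith
          have hv2 : v < 2*A₀ * d y z := by
            have h3 := mul_lt_mul_of_pos_left hcase h2A
            rwa [← mul_assoc, mul_inv_cancel₀ h2A.ne', one_mul] at h3
          have hu8 : u ≤ 8*A₀*A₀*A₀*r := by
            have s1 : u ≤ 2*A₀*(2*A₀*(d y z)) := by
              refine huv.trans ?_
              have := mul_le_mul_of_nonneg_left hv2.le h2A.le
              linarith [this]
            have s2 : 2*A₀*(2*A₀*(d y z)) ≤ 2*A₀*(2*A₀*(2*A₀*r)) := by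
              apply mul_le_mul_of_nonneg_left _ h2A.le
              exact mul_le_mul_of_nonneg_left hdyz h2A.le
            calc u ≤ 2*A₀*(2*A₀*(d y z)) := s1
              _ ≤ 2*A₀*(2*A₀*(2*A₀*r)) := s2
              _ = 8*A₀*A₀*A₀*r := by ring
          have hone_le : 1 ≤ 8*A₀*A₀*A₀*w := by
            rw [hw_def, mul_div_assoc' (8*A₀*A₀*A₀), le_div_iff₀ hu0, one_mul]
            exact hu8
          have honeβ : 1 ≤ (8*A₀*A₀*A₀) ^ θ * w ^ θ := by
            calc (1:ℝ) = 1 ^ θ := (Real.one_rpow θ).symm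
              _ ≤ (8*A₀*A₀*A₀*w) ^ θ := Real.rpow_le_rpow zero_le_one hone_le hθ.le
              _ = (8*A₀*A₀*A₀) ^ θ * w ^ θ := Real.mul_rpow hA8.le hw0.le
          have hpt : ∀ p : X, 0 ≤ d x₀ p → |φ p| ≤ Cφ * m⁻¹ := by
            intro p hdp
            have h1 := hφ.1 p
            have honep : (1 / (1 + d x₀ p)) ^ θ ≤ 1 := by
              apply Real.rpow_le_one (div_nonneg zero_le_one (by linarith)) _ hθ.le
              rw [div_le_one (by linarith : (0:ℝ) < 1 + d x₀ p)]
              linarith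
            calc |φ p| ≤ Cφ *
                ((μ (hball d x₀ 1) + μ (hball d x₀ (d x₀ p))).toReal)⁻¹ *
                (1 / (1 + d x₀ p)) ^ θ := h1
              _ ≤ Cφ * m⁻¹ * 1 := by
                  apply mul_le_mul _ honep
                    (Real.rpow_nonneg (div_nonneg zero_le_one (by linarith)) θ)
                    (mul_nonneg hCφ (inv_nonneg.mpr hm.le))
                  exact mul_le_mul_of_nonneg_left (hsum p) hCφ
              _ = Cφ * m⁻¹ := mul_one _
          have hby := hpt y hdy
          have hbz := hpt z hdz
          have habs : |φ y - φ z| ≤ |φ y| + |φ z| := abs_sub _ _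
          have h5 : |φ y - φ z| ≤ 2 * (Cφ * m⁻¹) := by linarith
          have h6 : 2 * (Cφ * m⁻¹) ≤ 2 * (Cφ * m⁻¹) * ((8*A₀*A₀*A₀) ^ θ * w ^ θ) := by
            nth_rewrite 1 [← mul_one (2 * (Cφ * m⁻¹))]
            apply mul_le_mul_of_nonneg_left honeβ
            have h7 : (0:ℝ) ≤ m⁻¹ := inv_nonneg.mpr hm.le
            positivity
          calc |φ y - φ z| ≤ 2 * (Cφ * m⁻¹) * ((8*A₀*A₀*A₀) ^ θ * w ^ θ) :=
              h5.trans h6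
            _ = 2*(8*A₀*A₀*A₀) ^ θ * (Cφ * m⁻¹ * w ^ θ) := by ring
            _ ≤ ((4*A₀*A₀) ^ θ + 2*(8*A₀*A₀*A₀) ^ θ) * (Cφ * m⁻¹ * w ^ θ) := by
                apply mul_le_mul_of_nonneg_right _ hCm
                linarith
      calc |φ y - φ z| ≤
          ((4*A₀*A₀) ^ θ + 2*(8*A₀*A₀*A₀) ^ θ) * (Cφ * m⁻¹ * w ^ θ) := hkey
        _ ≤ ((4*A₀*A₀) ^ θ + 2*(8*A₀*A₀*A₀) ^ θ) *
            (Cφ * m⁻¹ * ((c₁/m) ^ (θ/γ) * M ^ (θ/γ))) := by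
            have hc4 : (0:ℝ) ≤ (4*A₀*A₀) ^ θ := Real.rpow_nonneg hA4.le θ
            have hc8 : (0:ℝ) ≤ (8*A₀*A₀*A₀) ^ θ := Real.rpow_nonneg hA8.le θ
            apply mul_le_mul_of_nonneg_left _ (by linarith)
            exact mul_le_mul_of_nonneg_left hwβ
              (mul_nonneg hCφ (inv_nonneg.mpr hm.le))
        _ = K₂ * Cφ * M ^ (θ/γ) := by rw [hK₂]; ring
        _ ≤ (K₁ + K₂) * Cφ * M ^ (θ/γ) := by
            apply mul_le_mul_of_nonneg_right _
              (Real.rpow_nonneg ENNReal.toReal_nonneg _)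
            exact mul_le_mul_of_nonneg_right (by linarith) hCφ
    · intro hr1 y hy
      refine (size x r hr1 y hy).trans ?_
      apply mul_le_mul_of_nonneg_right _ (Real.rpow_nonneg ENNReal.toReal_nonneg _)
      exact mul_le_mul_of_nonneg_right (by linarith) hCφ
end
end

section
/- Let (X,d,μ) be a space of homogeneous type with upper dimension γ, and let R be an inhomogeneous Calderón–Zygmund operator of order (ν,s) with kernel K. Let γ/(γ+min{ν,s}) < p < 1 and let a be a local (p,2)-atom supported in B = B(x_B,r_B) with r_B < T (so ∫ a dμ = 0). Then for each k ≥ 1, writing C_k = B(x_B, A₀2^{k+1}r_B) \ B(x_B, A₀2^k r_B), one has ‖Ra‖_{L²(C_k)} ≤ C |B(x_B, 2^{k+1}A₀ r_B)|^{1/2 − 1/p} · 2^{k(γ(1/p−1) − s)}, with C depending only on A₀, A′, γ, p, s. -/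
open MeasureTheory ENNReal Filter Topology

noncomputable section

variable {X : Type*}

set_option maxHeartbeats 1000000 in
/-- Annular `L²` decay estimate for the image of a local `(p,2)`-atom with
vanishing moment under an inhomogeneous Calderón–Zygmund operator. -/
theorem stmt15 [MeasurableSpace X] (d : X → X → ℝ) (μ : Measure X) (A₀ A' γ : ℝ)
    (hX : IsHomType d μ A₀ A' γ) (ν s : ℝ) (hν : 0 < ν) (hs : 0 < s)
    (p : ℝ) (hp : γ / (γ + min ν s) < p) (hp1 : p < 1) (T : ℝ) (hT : 0 < T)
    (K : X → X → ℝ) (C₂ : ℝ) (hC₂ : 0 < C₂)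
    (hKreg : ∀ x y z, 2 * A₀ * d y z ≤ d x z → x ≠ z →
      |K x y - K x z| ≤ C₂ * (d y z / d x z) ^ s * (μ (hball d x (d x z))).toReal⁻¹) :
    ∃ C : ℝ, 0 < C ∧
      ∀ (a Ra : X → ℝ) (x_B : X) (r_B : ℝ) (k : ℕ), 1 ≤ k → 0 < r_B → r_B < T →
        (∀ x, a x ≠ 0 → x ∈ hball d x_B r_B) →
        eLpNorm a 2 μ ≤ μ (hball d x_B r_B) ^ ((1:ℝ)/2 - 1/p) →
        Integrable a μ → (∫ x, a x ∂μ) = 0 →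
        (∀ x, x ∉ hball d x_B r_B → Ra x = ∫ y, K x y * a y ∂μ) →
        eLpNorm Ra 2 (μ.restrict
            (hball d x_B (A₀ * 2^(k+1) * r_B) \ hball d x_B (A₀ * 2^k * r_B)))
          ≤ ENNReal.ofReal C * μ (hball d x_B (2^(k+1) * A₀ * r_B)) ^ ((1:ℝ)/2 - 1/p) *
              ENNReal.ofReal (2 ^ ((k:ℝ) * (γ * (1/p - 1) - s))) := by
  classical
  have hA0 := hX.A0_ge
  have hA0pos : (0:ℝ) < A₀ := lt_of_lt_of_le one_pos hA0
  have hA' := hX.A'_pos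
  have hγ := hX.gamma_pos
  have hmin : 0 < min ν s := lt_min hν hs
  have hppos : 0 < p := (div_pos hγ (by linarith)).trans hp
  have he : 0 < 1/p - 1 := by
    have : 1 < 1/p := by rw [one_div]; exact (one_lt_inv₀ hppos).2 hp1
    linarith
  have h3A : (0:ℝ) < 3*A₀ := by linarith
  have h2A : (0:ℝ) < 2*A₀ := by linarith
  have hG : 0 < A' * (3*A₀)^γ := mul_pos hA' (Real.rpow_pos_of_pos h3A γ)
  have hG2 : 0 < A' * (2*A₀)^γ := mul_pos hA' (Real.rpow_pos_of_pos h2A γ)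
  refine ⟨C₂ * (A' * (3*A₀)^γ) * ((A' * (2*A₀)^γ) ^ (1/p - 1)), 
    mul_pos (mul_pos hC₂ hG) (Real.rpow_pos_of_pos hG2 _), ?_⟩
  intro a Ra x_B r_B k hk hr hrT hsupp ha2 haint hmean hRa
  have hsym := hX.symm
  set B : Set X := hball d x_B r_B with hBdef
  set Rk : ℝ := 2^(k+1)*A₀*r_B with hRkdef
  have hRkpos : 0 < Rk := mul_pos (mul_pos (pow_pos two_pos _) hA0pos) hr
  set Bk : Set X := hball d x_B Rk with hBkdef
  set VB : ℝ := (μ B).toReal with hVBdef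
  set Vk : ℝ := (μ Bk).toReal with hVkdef
  have hVB : 0 < VB := ENNReal.toReal_pos (hX.pos _ _ hr).ne' (hX.fin _ _).ne
  have hVk : 0 < Vk := ENNReal.toReal_pos (hX.pos _ _ hRkpos).ne' (hX.fin _ _).ne
  have hμB_eq : μ B = ENNReal.ofReal VB := (ENNReal.ofReal_toReal (hX.fin _ _).ne).symm
  have hμBk_eq : μ Bk = ENNReal.ofReal Vk := (ENNReal.ofReal_toReal (hX.fin _ _).ne).symm
  have hradius : A₀ * 2^(k+1) * r_B = Rk := by rw [hRkdef]; ring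
  rw [hradius]
  have h2k : (2:ℝ) ≤ 2^k := by
    calc (2:ℝ) = 2^1 := (pow_one 2).symm
    _ ≤ 2^k := pow_le_pow_right₀ one_le_two hk
  have h2kpos : (0:ℝ) < 2^k := pow_pos two_pos k
  -- L¹ bound on the atom
  have hsupport : Function.support a ⊆ B := fun x hx => hsupp x hx
  have hL2restrict : eLpNorm a 2 (μ.restrict B) = eLpNorm a 2 μ :=
    eLpNorm_restrict_eq_of_support_subset hsupport
  have hL1 : eLpNorm a 1 μ ≤ ENNReal.ofReal (VB ^ (1 - 1/p)) := by
    calc eLpNorm a 1 μ = eLpNorm a 1 (μ.restrict B) :=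
        (eLpNorm_restrict_eq_of_support_subset hsupport).symm
    _ ≤ eLpNorm a 2 (μ.restrict B) *
        (μ.restrict B Set.univ) ^ (1/(1:ℝ≥0∞).toReal - 1/(2:ℝ≥0∞).toReal) :=
        eLpNorm_le_eLpNorm_mul_rpow_measure_univ one_le_two haint.aestronglyMeasurable.restrict
    _ = eLpNorm a 2 μ * μ B ^ ((1:ℝ)/2) := by
        rw [hL2restrict, Measure.restrict_apply_univ]
        norm_num
    _ ≤ μ B ^ ((1:ℝ)/2 - 1/p) * μ B ^ ((1:ℝ)/2) := mul_le_mul_left ha2 _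
    _ = ENNReal.ofReal (VB ^ (1 - 1/p)) := by
        rw [hμB_eq, ENNReal.ofReal_rpow_of_pos hVB, ENNReal.ofReal_rpow_of_pos hVB,
          ← ENNReal.ofReal_mul (Real.rpow_nonneg hVB.le _), ← Real.rpow_add hVB]
        congr 1
        ring
  set I₁ : ℝ := ∫ y, |a y| ∂μ with hI₁def
  have hI1nn : 0 ≤ I₁ := integral_nonneg fun y => abs_nonneg _
  have hI1 : I₁ ≤ VB ^ (1 - 1/p) := by
    have h1 : I₁ = (eLpNorm a 1 μ).toReal := by
      rw [hI₁def, eLpNorm_one_eq_lintegral_enorm,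
        ← integral_norm_eq_lintegral_enorm haint.aestronglyMeasurable]
      simp [Real.norm_eq_abs]
    rw [h1]
    calc (eLpNorm a 1 μ).toReal ≤ (ENNReal.ofReal (VB ^ (1 - 1/p))).toReal :=
        ENNReal.toReal_mono ENNReal.ofReal_ne_top hL1
    _ = VB ^ (1 - 1/p) := ENNReal.toReal_ofReal (Real.rpow_nonneg hVB.le _)
  -- doubling comparison between B and Bk
  have hdoub2 : Vk ≤ A' * (2*A₀)^γ * 2^((k:ℝ)*γ) * VB := by
    have hlam : (1:ℝ) ≤ 2^(k+1)*A₀ := by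
      have h1 : (1:ℝ) ≤ 2^(k+1) := one_le_pow₀ one_le_two
      nlinarith [mul_nonneg (sub_nonneg.2 hA0) (pow_pos (two_pos (α := ℝ)) (k+1)).le]
    have h := hX.doubling x_B r_B (2^(k+1)*A₀) hlam
    have h4 := ENNReal.toReal_mono
      (ENNReal.mul_ne_top ENNReal.ofReal_ne_top (hX.fin _ _).ne) h
    rw [ENNReal.toReal_mul, ENNReal.toReal_ofReal
      (mul_nonneg hA'.le (Real.rpow_nonneg (by positivity) γ))] at h4
    have hexp : ((2:ℝ)^(k+1)*A₀)^γ = (2*A₀)^γ * 2^((k:ℝ)*γ) := by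
      rw [Real.mul_rpow (by positivity) hA0pos.le, Real.mul_rpow (by norm_num) hA0pos.le,
        ← Real.rpow_natCast (2:ℝ) (k+1), ← Real.rpow_mul (by norm_num)]
      push_cast
      rw [show ((k:ℝ)+1)*γ = γ + (k:ℝ)*γ by ring, Real.rpow_add two_pos]
      ring
    rw [hexp] at h4
    calc Vk ≤ A' * ((2*A₀)^γ * 2^((k:ℝ)*γ)) * VB := h4
    _ = A' * (2*A₀)^γ * 2^((k:ℝ)*γ) * VB := by ring
  have hVBbound : VB ^ (1 - 1/p) ≤
      (A' * (2*A₀)^γ) ^ (1/p - 1) * 2^((k:ℝ)*γ*(1/p-1)) * Vk ^ (1 - 1/p) := by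
    set c : ℝ := A' * (2*A₀)^γ * 2^((k:ℝ)*γ) with hcdef
    have hcpos : 0 < c := mul_pos hG2 (Real.rpow_pos_of_pos two_pos _)
    have hVBe : 0 < VB ^ (1/p - 1) := Real.rpow_pos_of_pos hVB _
    have hVke : 0 < Vk ^ (1/p - 1) := Real.rpow_pos_of_pos hVk _
    have h5 : Vk ^ (1/p - 1) ≤ c ^ (1/p - 1) * VB ^ (1/p - 1) := by
      calc Vk ^ (1/p - 1) ≤ (c * VB) ^ (1/p - 1) :=
          Real.rpow_le_rpow hVk.le hdoub2 he.le
      _ = c ^ (1/p - 1) * VB ^ (1/p - 1) := Real.mul_rpow hcpos.le hVB.le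
    have h6 : (VB ^ (1/p - 1))⁻¹ ≤ c ^ (1/p - 1) * (Vk ^ (1/p - 1))⁻¹ := by
      rw [← div_eq_mul_inv, le_div_iff₀ hVke, inv_mul_eq_div, div_le_iff₀ hVBe]
      exact h5
    have hce : c ^ (1/p - 1) = (A' * (2*A₀)^γ) ^ (1/p - 1) * 2^((k:ℝ)*γ*(1/p-1)) := by
      rw [hcdef, Real.mul_rpow hG2.le (Real.rpow_nonneg (by norm_num) _),
        ← Real.rpow_mul (by norm_num : (0:ℝ) ≤ 2)]
    rw [hce] at h6
    rw [show (1 - 1/p : ℝ) = -(1/p - 1) by ring, Real.rpow_neg hVB.le,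
      Real.rpow_neg hVk.le]
    exact h6
  -- bound for the (A₀ 2^k)^{-s} factor
  have hQnn : (0:ℝ) ≤ ((A₀*2^k)⁻¹)^s :=
    Real.rpow_nonneg (inv_nonneg.2 (mul_nonneg hA0pos.le h2kpos.le)) s
  have hQ : ((A₀*2^k)⁻¹)^s ≤ 2^((k:ℝ)*(-s)) := by
    have h7 : (A₀*2^k)⁻¹ ≤ ((2:ℝ)^k)⁻¹ := by
      apply inv_anti₀ h2kpos
      nlinarith [mul_nonneg (sub_nonneg.2 hA0) h2kpos.le]
    calc ((A₀*2^k)⁻¹)^s ≤ (((2:ℝ)^k)⁻¹)^s :=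
        Real.rpow_le_rpow (inv_nonneg.2 (mul_nonneg hA0pos.le h2kpos.le)) h7 hs.le
    _ = 2^((k:ℝ)*(-s)) := by
        rw [← Real.rpow_natCast (2:ℝ) k, ← Real.rpow_neg (by norm_num : (0:ℝ) ≤ 2),
          ← Real.rpow_mul (by norm_num : (0:ℝ) ≤ 2) _ s,
          show (-(k:ℝ))*s = (k:ℝ)*(-s) by ring]
  set KB : ℝ := C₂ * ((A₀*2^k)⁻¹)^s * (A' * (3*A₀)^γ / Vk) with hKBdef
  have hKBnn : 0 ≤ KB :=
    mul_nonneg (mul_nonneg hC₂.le hQnn) (div_nonneg hG.le hVk.le)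
  -- pointwise bound on the annulus
  have hpoint : ∀ x ∈ Bk \ hball d x_B (A₀*2^k*r_B), |Ra x| ≤ KB * I₁ := by
    intro x hx
    have hxlow : A₀*2^k*r_B ≤ d x x_B := by
      rw [hsym x x_B]
      exact not_lt.1 hx.2
    have hDpos : 0 < d x x_B :=
      lt_of_lt_of_le (mul_pos (mul_pos hA0pos h2kpos) hr) hxlow
    have hxne : x ≠ x_B := by
      intro h
      rw [h, (hX.eq_zero x_B x_B).2 rfl] at hDpos
      exact lt_irrefl 0 hDpos
    have hxnotB : x ∉ B := by
      intro hxB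
      have h8 : r_B ≤ A₀*2^k*r_B := by
        nlinarith [mul_nonneg (sub_nonneg.2 hA0) h2kpos.le, hr.le, h2k,
          mul_nonneg (mul_nonneg (sub_nonneg.2 hA0) h2kpos.le) hr.le,
          mul_nonneg (sub_nonneg.2 h2k) hr.le]
      exact hx.2 (lt_of_lt_of_le hxB h8)
    set W : ℝ := (μ (hball d x (d x x_B))).toReal with hWdef
    have hWpos : 0 < W := ENNReal.toReal_pos (hX.pos _ _ hDpos).ne' (hX.fin _ _).ne
    have hsub : Bk ⊆ hball d x (3*A₀ * d x x_B) := by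
      intro z hz
      have hz' : d x_B z < Rk := hz
      have hps : (2:ℝ)^(k+1) = 2^k*2 := pow_succ 2 k
      have h2D : Rk ≤ 2 * d x x_B := by
        rw [hRkdef]
        calc (2:ℝ)^(k+1)*A₀*r_B = 2*(A₀*2^k*r_B) := by rw [hps]; ring
        _ ≤ 2 * d x x_B := by linarith
      show d x z < 3*A₀*d x x_B
      calc d x z ≤ A₀ * (d x x_B + d x_B z) := hX.tri x z x_B
      _ < 3*A₀*d x x_B := by
        nlinarith [mul_lt_mul_of_pos_left (lt_of_lt_of_le hz' h2D) hA0pos]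
    have hWcomp : Vk ≤ A' * (3*A₀)^γ * W := by
      have h1 : μ Bk ≤ μ (hball d x (3*A₀ * d x x_B)) := measure_mono hsub
      have h2 := hX.doubling x (d x x_B) (3*A₀) (by linarith)
      have h3 : μ Bk ≤ ENNReal.ofReal (A' * (3*A₀)^γ) * μ (hball d x (d x x_B)) :=
        h1.trans h2
      have h4 := ENNReal.toReal_mono
        (ENNReal.mul_ne_top ENNReal.ofReal_ne_top (hX.fin _ _).ne) h3
      rwa [ENNReal.toReal_mul, ENNReal.toReal_ofReal hG.le] at h4
    have hWinv : W⁻¹ ≤ A' * (3*A₀)^γ / Vk := by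
      rw [le_div_iff₀ hVk, inv_mul_le_iff₀ hWpos]
      linarith [mul_comm W (A' * (3*A₀)^γ)]
    have hker : ∀ y, a y ≠ 0 → |K x y - K x x_B| ≤ KB := by
      intro y hy
      have hyB : d x_B y < r_B := hsupp y hy
      have hdy : d y x_B < r_B := by rw [hsym]; exact hyB
      have hdynn : 0 ≤ d y x_B := hX.nonneg y x_B
      have hcond : 2*A₀*d y x_B ≤ d x x_B := by
        nlinarith [mul_le_mul_of_nonneg_left hdy.le (mul_pos two_pos hA0pos).le,
          mul_nonneg (mul_nonneg (sub_nonneg.2 h2k) hA0pos.le) hr.le, hxlow]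
      have hreg := hKreg x y x_B hcond hxne
      have hq : (d y x_B / d x x_B)^s ≤ ((A₀*2^k)⁻¹)^s := by
        apply Real.rpow_le_rpow (div_nonneg hdynn hDpos.le) ?_ hs.le
        calc d y x_B / d x x_B ≤ r_B / (A₀*2^k*r_B) :=
            div_le_div₀ hr.le hdy.le (mul_pos (mul_pos hA0pos h2kpos) hr) hxlow
        _ = (A₀*2^k)⁻¹ := by
            field_simp
      calc |K x y - K x x_B| ≤ C₂ * (d y x_B / d x x_B)^s *
            (μ (hball d x (d x x_B))).toReal⁻¹ := hreg
      _ = C₂ * (d y x_B / d x x_B)^s * W⁻¹ := by rw [hWdef]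
      _ ≤ KB := by
          rw [hKBdef]
          exact mul_le_mul (mul_le_mul_of_nonneg_left hq hC₂.le) hWinv
            (inv_nonneg.2 hWpos.le) (mul_nonneg hC₂.le hQnn)
    rw [hRa x hxnotB]
    by_cases hint : Integrable (fun y => K x y * a y) μ
    · have hg : Integrable (fun y => (K x y - K x x_B) * a y) μ := by
        have h := hint.sub (haint.const_mul (K x x_B))
        simpa [sub_mul, Pi.sub_def] using h
      have heq : (∫ y, K x y * a y ∂μ) = ∫ y, (K x y - K x x_B) * a y ∂μ := by
        have h9 : ∫ y, (K x y - K x x_B) * a y ∂μ =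
            (∫ y, K x y * a y ∂μ) - K x x_B * ∫ y, a y ∂μ := by
          simp_rw [sub_mul]
          rw [integral_sub hint (haint.const_mul _), integral_const_mul]
        rw [h9, hmean, mul_zero, sub_zero]
      rw [heq]
      have hni := norm_integral_le_integral_norm (μ := μ)
        (f := fun y => (K x y - K x x_B) * a y)
      simp only [Real.norm_eq_abs] at hni
      calc |∫ y, (K x y - K x x_B) * a y ∂μ| ≤ ∫ y, |(K x y - K x x_B) * a y| ∂μ := hni
      _ ≤ ∫ y, KB * |a y| ∂μ := by
          apply integral_mono hg.abs (haint.abs.const_mul KB)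
          intro y
          dsimp only
          by_cases hy : a y = 0
          · simp [hy]
          · rw [abs_mul]
            exact mul_le_mul_of_nonneg_right (hker y hy) (abs_nonneg _)
      _ = KB * I₁ := integral_const_mul KB _
    · rw [integral_undef hint]
      simpa using mul_nonneg hKBnn hI1nn
  -- assemble
  have hSmeas : MeasurableSet (Bk \ hball d x_B (A₀*2^k*r_B)) :=
    (hX.meas _ _).diff (hX.meas _ _)
  have hae : ∀ᵐ x ∂(μ.restrict (Bk \ hball d x_B (A₀*2^k*r_B))), ‖Ra x‖ ≤ KB * I₁ := by
    rw [ae_restrict_iff' hSmeas]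
    exact ae_of_all _ fun x hx => by rw [Real.norm_eq_abs]; exact hpoint x hx
  -- final real inequality
  have hfinal : Vk^((2:ℝ)⁻¹) * (KB * I₁) ≤
      C₂ * (A' * (3*A₀)^γ) * ((A' * (2*A₀)^γ) ^ (1/p - 1)) * Vk^((1:ℝ)/2 - 1/p) *
        2^((k:ℝ)*(γ*(1/p-1)-s)) := by
    have hFnn : 0 ≤ (A' * (2*A₀)^γ) ^ (1/p - 1) * 2^((k:ℝ)*γ*(1/p-1)) * Vk ^ (1 - 1/p) :=
      mul_nonneg (mul_nonneg (Real.rpow_nonneg hG2.le _) (Real.rpow_nonneg (by norm_num) _))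
        (Real.rpow_nonneg hVk.le _)
    have step1 : KB * I₁ ≤
        (C₂ * 2^((k:ℝ)*(-s)) * (A' * (3*A₀)^γ / Vk)) *
          ((A' * (2*A₀)^γ) ^ (1/p - 1) * 2^((k:ℝ)*γ*(1/p-1)) * Vk ^ (1 - 1/p)) := by
      calc KB * I₁ ≤ KB * ((A' * (2*A₀)^γ) ^ (1/p - 1) * 2^((k:ℝ)*γ*(1/p-1)) *
            Vk ^ (1 - 1/p)) :=
          mul_le_mul_of_nonneg_left (hI1.trans hVBbound) hKBnn
      _ ≤ _ := by
          apply mul_le_mul_of_nonneg_right ?_ hFnn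
          rw [hKBdef]
          exact mul_le_mul_of_nonneg_right
            (mul_le_mul_of_nonneg_left hQ hC₂.le) (div_nonneg hG.le hVk.le)
    have i1 : (2:ℝ)^((k:ℝ)*(-s)) * 2^((k:ℝ)*γ*(1/p-1)) = 2^((k:ℝ)*(γ*(1/p-1)-s)) := by
      rw [← Real.rpow_add two_pos]
      congr 1
      ring
    have i2 : Vk^((2:ℝ)⁻¹) * Vk^(1 - 1/p) * Vk⁻¹ = Vk^((1:ℝ)/2 - 1/p) := by
      rw [← Real.rpow_add hVk, ← Real.rpow_neg_one Vk, ← Real.rpow_add hVk]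
      congr 1
      ring
    calc Vk^((2:ℝ)⁻¹) * (KB * I₁) ≤
        Vk^((2:ℝ)⁻¹) * ((C₂ * 2^((k:ℝ)*(-s)) * (A' * (3*A₀)^γ / Vk)) *
          ((A' * (2*A₀)^γ) ^ (1/p - 1) * 2^((k:ℝ)*γ*(1/p-1)) * Vk ^ (1 - 1/p))) :=
        mul_le_mul_of_nonneg_left step1 (Real.rpow_nonneg hVk.le _)
    _ = C₂ * (A' * (3*A₀)^γ) * ((A' * (2*A₀)^γ) ^ (1/p - 1)) *
          ((2:ℝ)^((k:ℝ)*(-s)) * 2^((k:ℝ)*γ*(1/p-1))) *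
          (Vk^((2:ℝ)⁻¹) * Vk^(1 - 1/p) * Vk⁻¹) := by
        rw [div_eq_mul_inv]
        ring
    _ = _ := by rw [i1, i2]; ring
  calc eLpNorm Ra 2 (μ.restrict (Bk \ hball d x_B (A₀*2^k*r_B)))
      ≤ (μ.restrict (Bk \ hball d x_B (A₀*2^k*r_B)) Set.univ) ^ ((2:ℝ≥0∞).toReal)⁻¹ *
        ENNReal.ofReal (KB * I₁) := eLpNorm_le_of_ae_bound hae
  _ ≤ (μ Bk) ^ ((2:ℝ)⁻¹) * ENNReal.ofReal (KB * I₁) := by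
      rw [Measure.restrict_apply_univ]
      simp only [ENNReal.toReal_ofNat]
      exact mul_le_mul_left
        (ENNReal.rpow_le_rpow (measure_mono Set.diff_subset) (by norm_num)) _
  _ = ENNReal.ofReal (Vk^((2:ℝ)⁻¹) * (KB * I₁)) := by
      rw [hμBk_eq, ENNReal.ofReal_rpow_of_pos hVk,
        ← ENNReal.ofReal_mul (Real.rpow_nonneg hVk.le _)]
  _ ≤ ENNReal.ofReal (C₂ * (A' * (3*A₀)^γ) * ((A' * (2*A₀)^γ) ^ (1/p - 1)) *
        Vk^((1:ℝ)/2 - 1/p) * 2^((k:ℝ)*(γ*(1/p-1)-s))) := ENNReal.ofReal_le_ofReal hfinal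
  _ = ENNReal.ofReal (C₂ * (A' * (3*A₀)^γ) * ((A' * (2*A₀)^γ) ^ (1/p - 1))) *
        μ Bk ^ ((1:ℝ)/2 - 1/p) *
        ENNReal.ofReal (2 ^ ((k:ℝ) * (γ * (1/p - 1) - s))) := by
      rw [hμBk_eq, ENNReal.ofReal_rpow_of_pos hVk,
        ← ENNReal.ofReal_mul (mul_pos (mul_pos hC₂ hG) (Real.rpow_pos_of_pos hG2 _)).le,
        ← ENNReal.ofReal_mul
          (mul_nonneg (mul_pos (mul_pos hC₂ hG) (Real.rpow_pos_of_pos hG2 _)).le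
            (Real.rpow_nonneg hVk.le _))]
end
end

section
/- Let (X,d,μ) be a space of homogeneous type with upper dimension γ, R an inhomogeneous Calderón–Zygmund operator of order (ν,s), and γ/(γ+min{ν,s}) < p ≤ 1. Then there exists C > 0, independent of the atom, such that for every local (p,2)-atom a one has ‖Ra‖_{L^p(X)} ≤ C. -/
open MeasureTheory ENNReal Filter Topology

noncomputable section

variable {X : Type*}

/-- auxiliary: invert a real inequality. -/
lemma inv_le_aux {b s c : ℝ} (hb : 0 < b) (hs : 0 < s) (h : b ≤ c * s) :
    s⁻¹ ≤ c * b⁻¹ := by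
  have hc : 0 < c := by
    rcases le_or_gt c 0 with hc | hc
    · nlinarith
    · exact hc
  rw [show c * b⁻¹ = c / b by rw [div_eq_mul_inv], inv_eq_one_div,
    div_le_div_iff₀ hs hb]
  linarith

/-- auxiliary: quasi-metric ball inclusion computation. -/
lemma ball_calc1 {A₀ ρ t dz v : ℝ} (hA0 : 1 ≤ A₀) (h1 : v ≤ A₀ * (t + dz))
    (h2 : dz < t) (h3 : t ≤ 2*A₀*ρ) (h4 : 0 ≤ dz) : v < 2*A₀*(2*A₀)*ρ := by
  nlinarith

/-- auxiliary: lower bound for the distance to points of the atom ball. -/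
lemma dist_lower {A₀ r_B t u w q : ℝ} (hA0 : 1 ≤ A₀) (hq : 1 ≤ q) (hr : 0 < r_B)
    (htri : t ≤ A₀ * (w + u)) (hw : w < r_B) (hk : q * (2*A₀*r_B) ≤ t) :
    t ≤ 2*A₀*u ∧ q * r_B ≤ u := by
  have hA0p : (0:ℝ) < A₀ := by linarith
  have h1 : A₀ * w < A₀ * r_B := mul_lt_mul_of_pos_left hw hA0p
  have h2 : 2*A₀*r_B ≤ t := le_trans (le_mul_of_one_le_left (by nlinarith) hq) hk
  have hleft : t ≤ 2*A₀*u := by linarith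
  refine ⟨hleft, ?_⟩
  have h3 : q*(2*A₀*r_B) ≤ 2*A₀*u := le_trans hk hleft
  nlinarith

/-- auxiliary: ratio bound. -/
lemma ratio_le {A₀ q w r_B t : ℝ} (hA0 : 1 ≤ A₀) (hq : 1 ≤ q) (hr : 0 < r_B)
    (hw : w < r_B) (hw0 : 0 ≤ w) (ht : q * (2*A₀*r_B) ≤ t) : w / t ≤ q⁻¹ := by
  have hq0 : 0 < q := by linarith
  have hA0p : (0:ℝ) < A₀ := by linarith
  have hb : (0:ℝ) < 2*A₀*r_B := mul_pos (mul_pos two_pos hA0p) hr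
  have ht0 : 0 < t := lt_of_lt_of_le (lt_of_lt_of_le hb (le_mul_of_one_le_left hb.le hq)) ht
  rw [div_le_iff₀ ht0]
  have hinv : q⁻¹ * q = 1 := inv_mul_cancel₀ (by linarith)
  have hinv0 : 0 < q⁻¹ := inv_pos.mpr hq0
  nlinarith [mul_le_mul_of_nonneg_left ht hinv0.le]

set_option maxHeartbeats 1000000

/-- Uniform `L^p` bound for images of local `(p,2)`-atoms under an inhomogeneous
Calderón–Zygmund operator of order `(ν,s)`. -/
theorem stmt16 [MeasurableSpace X] (d : X → X → ℝ) (μ : Measure X) (A₀ A' γ : ℝ)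
    (hX : IsHomType d μ A₀ A' γ) (ν s : ℝ) (hν : 0 < ν) (hs : 0 < s)
    (p : ℝ) (hp : γ / (γ + min ν s) < p) (hp1 : p ≤ 1) (T : ℝ) (hT : 0 < T)
    (K : X → X → ℝ) (C₁ C₂ : ℝ) (hC₁ : 0 < C₁) (hC₂ : 0 < C₂)
    (hK : ∀ x y, x ≠ y → |K x y| ≤
      C₁ * min ((μ (hball d x (d x y))).toReal⁻¹)
        ((μ (hball d x (d x y))).toReal⁻¹ * d x y ^ (-ν)))
    (hKreg : ∀ x y z, 2 * A₀ * d y z ≤ d x z → x ≠ z →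
      |K x y - K x z| ≤ C₂ * (d y z / d x z) ^ s * (μ (hball d x (d x z))).toReal⁻¹)
    (NR : ℝ) (hNR : 0 ≤ NR) :
    ∃ C : ℝ, 0 < C ∧
      ∀ (a Ra : X → ℝ) (x_B : X) (r_B : ℝ), 0 < r_B →
        (∀ x, a x ≠ 0 → x ∈ hball d x_B r_B) →
        eLpNorm a 2 μ ≤ μ (hball d x_B r_B) ^ ((1:ℝ)/2 - 1/p) →
        Integrable a μ → (r_B < T → (∫ x, a x ∂μ) = 0) →
        (∀ x, x ∉ hball d x_B r_B → Ra x = ∫ y, K x y * a y ∂μ) →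
        eLpNorm Ra 2 μ ≤ ENNReal.ofReal NR * eLpNorm a 2 μ →
        eLpNorm Ra (ENNReal.ofReal p) μ ≤ ENNReal.ofReal C := by
  have hγ := hX.gamma_pos
  have hA0 := hX.A0_ge
  have hA0p : (0:ℝ) < A₀ := lt_of_lt_of_le one_pos hA0
  have hA' := hX.A'_pos
  set m : ℝ := min ν s with hm_def
  have hm : 0 < m := lt_min hν hs
  have hp0 : 0 < p := lt_trans (div_pos hγ (by linarith)) hp
  have hε : 0 < m * p - γ * (1 - p) := by
    rw [div_lt_iff₀ (by linarith)] at hp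
    nlinarith
  set ε : ℝ := m * p - γ * (1 - p) with hε_def
  set r : ℝ := (2:ℝ) ^ (-ε) with hr_def
  have hr0 : 0 < r := Real.rpow_pos_of_pos two_pos _
  have hr1 : r < 1 := Real.rpow_lt_one_of_one_lt_of_neg one_lt_two (by linarith)
  have hTν : 0 < T ^ (-ν) := Real.rpow_pos_of_pos hT _
  have hCT : 0 < C₁ * T ^ (-ν) := mul_pos hC₁ hTν
  have h2A : (1:ℝ) ≤ 2*A₀ := by linarith
  have h2Ap : (0:ℝ) < 2*A₀ := by linarith
  have h4A : (1:ℝ) ≤ 2*A₀*(2*A₀) := by nlinarith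
  have h4Ap : (0:ℝ) < 2*A₀*(2*A₀) := by nlinarith
  have h4γ : 0 < (2*A₀*(2*A₀)) ^ γ := Real.rpow_pos_of_pos h4Ap _
  have h2Aγ : 0 < (2*A₀) ^ γ := Real.rpow_pos_of_pos h2Ap _
  have h2γ : 0 < (2:ℝ) ^ γ := Real.rpow_pos_of_pos two_pos _
  have hA4γ : (0:ℝ) < A' * (2*A₀*(2*A₀)) ^ γ := mul_pos hA' h4γ
  have hA2γ : (0:ℝ) < A' * (2*A₀) ^ γ := mul_pos hA' h2Aγ
  have hA2g : (0:ℝ) < A' * 2 ^ γ := mul_pos hA' h2γ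
  set CC0 : ℝ := (C₂ + C₁ * T ^ (-ν)) * (A' * (2*A₀*(2*A₀)) ^ γ) with hCC0_def
  have hCC0 : 0 < CC0 := mul_pos (by linarith) hA4γ
  set D0 : ℝ := NR ^ p * (A' * (2*A₀) ^ γ) ^ (1 - p/2) with hD0_def
  have hD0 : 0 ≤ D0 :=
    mul_nonneg (Real.rpow_nonneg hNR _) (Real.rpow_nonneg hA2γ.le _)
  set D1 : ℝ := CC0 ^ p * (A' * 2 ^ γ) * (A' * (2*A₀) ^ γ) ^ (1 - p) with hD1_def
  have hD1 : 0 < D1 :=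
    mul_pos (mul_pos (Real.rpow_pos_of_pos hCC0 _) hA2g)
      (Real.rpow_pos_of_pos hA2γ _)
  set Ctot : ℝ := D0 + D1 * (1 - r)⁻¹ with hCtot_def
  have hCtot : 0 < Ctot :=
    add_pos_of_nonneg_of_pos hD0 (mul_pos hD1 (inv_pos.mpr (by linarith)))
  refine ⟨Ctot ^ (1/p), Real.rpow_pos_of_pos hCtot _, ?_⟩
  intro a Ra x_B r_B hrB hsupp ha2 haInt hcanc hRaDef hRa2
  set B : Set X := hball d x_B r_B with hB_def
  have hβ0 : μ B ≠ 0 := (hX.pos x_B r_B hrB).ne'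
  have hβt : μ B ≠ ⊤ := (hX.fin x_B r_B).ne
  set b : ℝ := (μ B).toReal with hb_def
  have hb0 : 0 < b := ENNReal.toReal_pos hβ0 hβt
  set R : ℝ := 2 * A₀ * r_B with hR_def
  have hR0 : 0 < R := by rw [hR_def]; exact mul_pos h2Ap hrB
  have hR2 : 2*r_B ≤ R := by
    rw [hR_def]
    exact mul_le_mul_of_nonneg_right (by linarith : (2:ℝ) ≤ 2*A₀) hrB.le
  set Bk : ℕ → Set X := fun k => hball d x_B ((2:ℝ)^k * R) with hBk_def
  have hBkmem : ∀ (k : ℕ) (x : X), x ∈ Bk k ↔ d x_B x < (2:ℝ)^k * R := by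
    intro k x; simp [hBk_def, hball]
  have hBkmeas : ∀ k, MeasurableSet (Bk k) := fun k => by
    rw [hBk_def]; exact hX.meas _ _
  have hBkfin : ∀ k, μ (Bk k) ≠ ⊤ := fun k => by
    rw [hBk_def]; exact (hX.fin _ _).ne
  have h2k : ∀ k : ℕ, (1:ℝ) ≤ 2^k := fun k => one_le_pow₀ one_le_two
  have h2kp : ∀ k : ℕ, (0:ℝ) < 2^k := fun k => pow_pos two_pos k
  have hRle : ∀ k : ℕ, R ≤ (2:ℝ)^k * R := fun k =>
    le_mul_of_one_le_left hR0.le (h2k k)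
  have hBkpos : ∀ k, μ (Bk k) ≠ 0 := fun k => by
    rw [hBk_def]
    exact (hX.pos _ _ (mul_pos (h2kp k) hR0)).ne'
  set bk : ℕ → ℝ := fun k => (μ (Bk k)).toReal with hbk_def
  have hbk0 : ∀ k, 0 < bk k := fun k => ENNReal.toReal_pos (hBkpos k) (hBkfin k)
  -- integral of |a|
  set I1 : ℝ := ∫ y, |a y| ∂μ with hI1_def
  have hI10 : 0 ≤ I1 := integral_nonneg (fun y => abs_nonneg _)
  -- Cauchy–Schwarz: ofReal I1 ≤ (μ B) ^ (1 - 1/p)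
  have hJ : ENNReal.ofReal I1 ≤ (μ B) ^ (1 - 1/p) := by
    have hnorm : ENNReal.ofReal I1 = ∫⁻ y, (‖a y‖₊ : ℝ≥0∞) ∂μ := by
      rw [hI1_def]
      simp_rw [← Real.norm_eq_abs]
      exact ofReal_integral_norm_eq_lintegral_enorm haInt
    have hind : (∫⁻ y, (‖a y‖₊ : ℝ≥0∞) ∂μ)
        = ∫⁻ y, (‖a y‖₊ : ℝ≥0∞) * (B.indicator (fun _ => (1:ℝ≥0∞)) y) ∂μ := by
      apply lintegral_congr; intro y
      by_cases hy : a y = 0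
      · simp [hy]
      · rw [Set.indicator_of_mem (hsupp y hy), mul_one]
    have hconj : Real.HolderConjugate 2 2 := Real.holderConjugate_iff.mpr ⟨one_lt_two, by norm_num⟩
    have hfm : AEMeasurable (fun y => (‖a y‖₊ : ℝ≥0∞)) μ :=
      haInt.aestronglyMeasurable.aemeasurable.nnnorm.coe_nnreal_ennreal
    have hgm : AEMeasurable (B.indicator fun _ => (1:ℝ≥0∞)) μ :=
      (measurable_const.indicator (hX.meas x_B r_B)).aemeasurable
    have hH := ENNReal.lintegral_mul_le_Lp_mul_Lq μ hconj hfm hgm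
    simp only [Pi.mul_apply] at hH
    have h2 : (∫⁻ y, (B.indicator (fun _ => (1:ℝ≥0∞)) y) ^ (2:ℝ) ∂μ) = μ B := by
      have heq : ∀ y, (B.indicator (fun _ => (1:ℝ≥0∞)) y) ^ (2:ℝ)
          = B.indicator (fun _ => (1:ℝ≥0∞)) y := by
        intro y; by_cases hy : y ∈ B
        · simp [hy]
        · simp only [Set.indicator_of_notMem hy]
          exact ENNReal.zero_rpow_of_pos two_pos
      simp_rw [heq]
      rw [lintegral_indicator (hX.meas x_B r_B)]
      simp [Measure.restrict_apply_univ]; rfl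
    have h1 : (∫⁻ y, ((‖a y‖₊ : ℝ≥0∞)) ^ (2:ℝ) ∂μ) ^ ((1:ℝ)/2) = eLpNorm a 2 μ := by
      rw [eLpNorm_eq_lintegral_rpow_enorm_toReal (by norm_num) (by norm_num)]
      norm_num; rfl
    calc ENNReal.ofReal I1
        = ∫⁻ y, (‖a y‖₊ : ℝ≥0∞) * (B.indicator (fun _ => (1:ℝ≥0∞)) y) ∂μ := by
          rw [hnorm, hind]
      _ ≤ (∫⁻ y, ((‖a y‖₊ : ℝ≥0∞)) ^ (2:ℝ) ∂μ) ^ ((1:ℝ)/2)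
          * (∫⁻ y, (B.indicator (fun _ => (1:ℝ≥0∞)) y) ^ (2:ℝ) ∂μ) ^ ((1:ℝ)/2) := hH
      _ = eLpNorm a 2 μ * (μ B) ^ ((1:ℝ)/2) := by rw [h1, h2]
      _ ≤ (μ B) ^ ((1:ℝ)/2 - 1/p) * (μ B) ^ ((1:ℝ)/2) := mul_le_mul_left ha2 _
      _ = (μ B) ^ (1 - 1/p) := by
          rw [← ENNReal.rpow_add _ _ hβ0 hβt]; congr 1; ring
  have hβe : (μ B) ^ (1 - 1/p) = ENNReal.ofReal (b ^ (1 - 1/p)) := by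
    rw [hb_def, ← ENNReal.ofReal_rpow_of_pos hb0, ENNReal.ofReal_toReal hβt]
  have hI1b : I1 ≤ b ^ (1 - 1/p) := by
    have h := hJ
    rw [hβe] at h
    exact (ENNReal.ofReal_le_ofReal_iff (Real.rpow_nonneg hb0.le _)).mp h
  -- measure comparison for annuli
  have hmc : ∀ (k : ℕ) (x : X) (ρ : ℝ), 0 < ρ → (2:ℝ)^k * R ≤ d x_B x →
      d x_B x ≤ 2*A₀*ρ →
      (μ (hball d x ρ)).toReal⁻¹ ≤ (A' * (2*A₀*(2*A₀))^γ) * (bk k)⁻¹ := by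
    intro k x ρ hρ hxk hρ2
    have hsub : Bk k ⊆ hball d x ((2*A₀*(2*A₀)) * ρ) := by
      intro z hz
      have hz' : d x_B z < (2:ℝ)^k * R := (hBkmem k z).mp hz
      have h1 : d x z ≤ A₀ * (d x x_B + d x_B z) := hX.tri x z x_B
      rw [hX.symm x x_B] at h1
      show d x z < (2*A₀*(2*A₀)) * ρ
      exact ball_calc1 hA0 h1 (lt_of_lt_of_le hz' hxk) hρ2 (hX.nonneg x_B z)
    have hμc : μ (Bk k) ≤ ENNReal.ofReal (A' * (2*A₀*(2*A₀))^γ) * μ (hball d x ρ) :=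
      le_trans (measure_mono hsub) (hX.doubling x ρ _ h4A)
    have hfin : μ (hball d x ρ) ≠ ⊤ := (hX.fin _ _).ne
    have htr : bk k ≤ (A' * (2*A₀*(2*A₀))^γ) * (μ (hball d x ρ)).toReal := by
      have h := ENNReal.toReal_mono (ENNReal.mul_ne_top ENNReal.ofReal_ne_top hfin) hμc
      rwa [ENNReal.toReal_mul, ENNReal.toReal_ofReal hA4γ.le] at h
    exact inv_le_aux (hbk0 k) (ENNReal.toReal_pos (hX.pos x ρ hρ).ne' hfin) htr
  -- generic integral bound
  have int_bound : ∀ (g : X → ℝ) (M : ℝ), 0 ≤ M → (∀ y, a y ≠ 0 → |g y| ≤ M) →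
      |∫ y, g y * a y ∂μ| ≤ M * I1 := by
    intro g M hM hg
    by_cases hInt : Integrable (fun y => g y * a y) μ
    · have h1 : |∫ y, g y * a y ∂μ| ≤ ∫ y, |g y| * |a y| ∂μ := by
        simpa [Real.norm_eq_abs, abs_mul] using
          norm_integral_le_integral_norm (μ := μ) (fun y => g y * a y)
      have h2 : ∫ y, |g y| * |a y| ∂μ ≤ ∫ y, M * |a y| ∂μ := by
        apply integral_mono_of_nonneg
        · filter_upwards with y; positivity
        · exact haInt.abs.const_mul M
        · filter_upwards with y
          by_cases hy : a y = 0
          · simp [hy]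
          · exact mul_le_mul_of_nonneg_right (hg y hy) (abs_nonneg _)
      have h3 : ∫ y, M * |a y| ∂μ = M * I1 := by
        rw [hI1_def]; exact integral_const_mul M _
      linarith
    · rw [integral_undef hInt]
      simpa using mul_nonneg hM hI10
  -- key pointwise bound on annuli
  have key : ∀ (k : ℕ) (x : X), (2:ℝ)^k * R ≤ d x_B x →
      |Ra x| ≤ CC0 * (2:ℝ) ^ (-(k:ℝ)*m) * (bk k)⁻¹ * I1 := by
    intro k x hxk
    have htpos : 0 < d x_B x := lt_of_lt_of_le (mul_pos (h2kp k) hR0) hxk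
    have hxB : x ∉ B := by
      intro hx
      have hlt : d x_B x < r_B := hx
      linarith [hRle k, hR2]
    have h2km : (0:ℝ) < (2:ℝ)^(-(k:ℝ)*m) := Real.rpow_pos_of_pos two_pos _
    have hbki : (0:ℝ) ≤ (bk k)⁻¹ := inv_nonneg.mpr (hbk0 k).le
    have hM0 : 0 ≤ CC0 * (2:ℝ)^(-(k:ℝ)*m) * (bk k)⁻¹ :=
      mul_nonneg (mul_nonneg hCC0.le h2km.le) hbki
    rw [hRaDef x hxB]
    have hxkR : (2:ℝ)^k * (2*A₀*r_B) ≤ d x_B x := by rw [← hR_def]; exact hxk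
    by_cases hcase : r_B < T
    · -- cancellation case
      have hzero : ∫ y, a y ∂μ = 0 := hcanc hcase
      have hxxB : x ≠ x_B := by
        intro h
        rw [h, (hX.eq_zero x_B x_B).mpr rfl] at htpos
        exact lt_irrefl 0 htpos
      have hgb : ∀ y, a y ≠ 0 →
          |K x y - K x x_B| ≤ CC0 * (2:ℝ)^(-(k:ℝ)*m) * (bk k)⁻¹ := by
        intro y hy
        have hyB : d x_B y < r_B := hsupp y hy
        have hdyx : d y x_B < r_B := by rw [hX.symm y x_B]; exact hyB
        have hdyx0 : 0 ≤ d y x_B := hX.nonneg y x_B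
        have hdxxB : d x x_B = d x_B x := hX.symm x x_B
        have hcond : 2*A₀*d y x_B ≤ d x x_B := by
          rw [hdxxB]
          have := mul_lt_mul_of_pos_left hdyx h2Ap
          have hRR : 2*A₀*r_B = R := hR_def.symm
          linarith [hRle k, hxk]
        have hKb := hKreg x y x_B hcond hxxB
        have hrat : d y x_B / d x x_B ≤ ((2:ℝ)^k)⁻¹ := by
          rw [hdxxB]
          exact ratio_le hA0 (h2k k) hrB hdyx hdyx0 hxkR
        have hrats : (d y x_B / d x x_B) ^ s ≤ (2:ℝ)^(-(k:ℝ)*m) := by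
          have h2inv : ((2:ℝ)^k)⁻¹ = (2:ℝ)^(-(k:ℝ)) := by
            rw [← Real.rpow_natCast 2 k, ← Real.rpow_neg (by norm_num)]
          calc (d y x_B / d x x_B) ^ s ≤ ((2:ℝ)^(-(k:ℝ))) ^ s := by
                apply Real.rpow_le_rpow
                  (div_nonneg hdyx0 (by rw [hdxxB]; exact htpos.le))
                  (h2inv ▸ hrat) hs.le
            _ = (2:ℝ) ^ (-(k:ℝ)*s) := (Real.rpow_mul (by norm_num) _ _).symm
            _ ≤ (2:ℝ) ^ (-(k:ℝ)*m) := by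
                apply Real.rpow_le_rpow_of_exponent_le one_le_two
                have hms : m ≤ s := min_le_right ν s
                have := mul_le_mul_of_nonneg_left hms (Nat.cast_nonneg (α := ℝ) k)
                linarith
        have hmf : (μ (hball d x (d x x_B))).toReal⁻¹
            ≤ (A' * (2*A₀*(2*A₀))^γ) * (bk k)⁻¹ := by
          apply hmc k x (d x x_B) (by rw [hdxxB]; exact htpos) hxk
          rw [hdxxB]
          exact le_mul_of_one_le_left htpos.le h2A
        have hmf0 : (0:ℝ) ≤ (μ (hball d x (d x x_B))).toReal⁻¹ :=
          inv_nonneg.mpr ENNReal.toReal_nonneg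
        calc |K x y - K x x_B|
            ≤ C₂ * (d y x_B / d x x_B) ^ s * (μ (hball d x (d x x_B))).toReal⁻¹ := hKb
          _ ≤ C₂ * (2:ℝ)^(-(k:ℝ)*m) * (μ (hball d x (d x x_B))).toReal⁻¹ :=
              mul_le_mul_of_nonneg_right
                (mul_le_mul_of_nonneg_left hrats hC₂.le) hmf0
          _ ≤ C₂ * (2:ℝ)^(-(k:ℝ)*m) * ((A' * (2*A₀*(2*A₀))^γ) * (bk k)⁻¹) :=
              mul_le_mul_of_nonneg_left hmf
                (mul_nonneg hC₂.le h2km.le)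
          _ = (C₂ * (A' * (2*A₀*(2*A₀))^γ)) * (2:ℝ)^(-(k:ℝ)*m) * (bk k)⁻¹ := by ring
          _ ≤ CC0 * (2:ℝ)^(-(k:ℝ)*m) * (bk k)⁻¹ := by
              apply mul_le_mul_of_nonneg_right _ hbki
              apply mul_le_mul_of_nonneg_right _ h2km.le
              rw [hCC0_def]
              exact mul_le_mul_of_nonneg_right (by linarith) hA4γ.le
      have hb1 := int_bound (fun y => K x y - K x x_B) _ hM0 hgb
      have heq : ∫ y, (K x y - K x x_B) * a y ∂μ = ∫ y, K x y * a y ∂μ := by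
        by_cases hInt : Integrable (fun y => K x y * a y) μ
        · have hci : Integrable (fun y => K x x_B * a y) μ := haInt.const_mul _
          have hfeq : (fun y => (K x y - K x x_B) * a y)
              = fun y => K x y * a y - K x x_B * a y := by funext y; ring
          rw [hfeq, integral_sub hInt hci, integral_const_mul, hzero, mul_zero, sub_zero]
        · rw [integral_undef hInt, integral_undef]
          intro hc
          apply hInt
          have hfeq : (fun y => K x y * a y)
              = fun y => (K x y - K x x_B) * a y + K x x_B * a y := by funext y; ring
          rw [hfeq]
          exact hc.add (haInt.const_mul _)
      rw [← heq]
      exact hb1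
    · -- size case
      push_neg at hcase
      have hgb : ∀ y, a y ≠ 0 → |K x y| ≤ CC0 * (2:ℝ)^(-(k:ℝ)*m) * (bk k)⁻¹ := by
        intro y hy
        have hyB : d x_B y < r_B := hsupp y hy
        have h1 : d x_B x ≤ A₀ * (d x_B y + d x y) := by
          have := hX.tri x_B x y
          rwa [hX.symm y x] at this
        obtain ⟨hh, h3⟩ := dist_lower hA0 (h2k k) hrB h1 hyB hxkR
        have hdxy0 : 0 < d x y := lt_of_lt_of_le (mul_pos (h2kp k) hrB) h3
        have hxy : x ≠ y := by
          intro h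
          rw [(hX.eq_zero x y).mpr h] at hdxy0
          exact lt_irrefl 0 hdxy0
        have hKb := hK x y hxy
        have hmin : C₁ * min ((μ (hball d x (d x y))).toReal⁻¹)
            ((μ (hball d x (d x y))).toReal⁻¹ * d x y ^ (-ν))
            ≤ C₁ * ((μ (hball d x (d x y))).toReal⁻¹ * d x y ^ (-ν)) :=
          mul_le_mul_of_nonneg_left (min_le_right _ _) hC₁.le
        have hmf : (μ (hball d x (d x y))).toReal⁻¹
            ≤ (A' * (2*A₀*(2*A₀))^γ) * (bk k)⁻¹ := hmc k x (d x y) hdxy0 hxk hh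
        have hdν : d x y ^ (-ν) ≤ (2:ℝ)^(-(k:ℝ)*m) * T ^ (-ν) := by
          have hTk : (0:ℝ) < 2^k * T := mul_pos (h2kp k) hT
          have hTk2 : (2:ℝ)^k * T ≤ d x y :=
            le_trans (mul_le_mul_of_nonneg_left hcase (h2kp k).le) h3
          calc d x y ^ (-ν) ≤ ((2:ℝ)^k * T) ^ (-ν) :=
                Real.rpow_le_rpow_of_nonpos hTk hTk2 (by linarith)
            _ = ((2:ℝ)^k) ^ (-ν) * T ^ (-ν) := Real.mul_rpow (by positivity) hT.le
            _ ≤ (2:ℝ)^(-(k:ℝ)*m) * T ^ (-ν) := by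
                apply mul_le_mul_of_nonneg_right _ hTν.le
                rw [← Real.rpow_natCast 2 k, ← Real.rpow_mul (by norm_num)]
                apply Real.rpow_le_rpow_of_exponent_le one_le_two
                have hmν : m ≤ ν := min_le_left ν s
                have := mul_le_mul_of_nonneg_left hmν (Nat.cast_nonneg (α := ℝ) k)
                linarith
        have hmfl : (0:ℝ) ≤ (μ (hball d x (d x y))).toReal⁻¹ :=
          inv_nonneg.mpr ENNReal.toReal_nonneg
        calc |K x y| ≤ C₁ * ((μ (hball d x (d x y))).toReal⁻¹ * d x y ^ (-ν)) :=
              le_trans hKb hmin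
          _ ≤ C₁ * (((A' * (2*A₀*(2*A₀))^γ) * (bk k)⁻¹) * d x y ^ (-ν)) :=
              mul_le_mul_of_nonneg_left
                (mul_le_mul_of_nonneg_right hmf (Real.rpow_nonneg hdxy0.le _)) hC₁.le
          _ ≤ C₁ * (((A' * (2*A₀*(2*A₀))^γ) * (bk k)⁻¹)
                * ((2:ℝ)^(-(k:ℝ)*m) * T ^ (-ν))) :=
              mul_le_mul_of_nonneg_left
                (mul_le_mul_of_nonneg_left hdν (mul_nonneg hA4γ.le hbki)) hC₁.le
          _ = (C₁ * T ^ (-ν) * (A' * (2*A₀*(2*A₀))^γ)) * (2:ℝ)^(-(k:ℝ)*m)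
                * (bk k)⁻¹ := by ring
          _ ≤ CC0 * (2:ℝ)^(-(k:ℝ)*m) * (bk k)⁻¹ := by
              apply mul_le_mul_of_nonneg_right _ hbki
              apply mul_le_mul_of_nonneg_right _ h2km.le
              rw [hCC0_def]
              exact mul_le_mul_of_nonneg_right (by linarith) hA4γ.le
      exact int_bound (fun y => K x y) _ hM0 hgb
  -- doubling in real form
  have hBkval : ∀ k : ℕ, μ (Bk k) = μ (hball d x_B ((2:ℝ)^k * R)) := fun k => by
    rw [hBk_def]
  have hbk1 : ∀ k : ℕ, bk (k+1) ≤ A' * 2^γ * bk k := by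
    intro k
    have h := hX.doubling x_B ((2:ℝ)^k * R) 2 one_le_two
    rw [show (2:ℝ) * ((2:ℝ)^k * R) = (2:ℝ)^(k+1) * R by ring] at h
    have h2 := ENNReal.toReal_mono
      (ENNReal.mul_ne_top ENNReal.ofReal_ne_top ((hX.fin _ _).ne)) h
    rw [ENNReal.toReal_mul, ENNReal.toReal_ofReal hA2g.le] at h2
    show (μ (Bk (k+1))).toReal ≤ A' * 2^γ * (μ (Bk k)).toReal
    rw [hBkval (k+1), hBkval k]
    exact h2
  have hbkk : ∀ k : ℕ, bk k ≤ A' * ((2:ℝ)^k * (2*A₀))^γ * b := by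
    intro k
    have hlam : (1:ℝ) ≤ (2:ℝ)^k * (2*A₀) := by
      calc (1:ℝ) = 1 * 1 := by ring
        _ ≤ (2:ℝ)^k * (2*A₀) := mul_le_mul (h2k k) h2A zero_le_one (h2kp k).le
    have h := hX.doubling x_B r_B ((2:ℝ)^k * (2*A₀)) hlam
    rw [← hB_def] at h
    rw [show (2:ℝ)^k * (2*A₀) * r_B = (2:ℝ)^k * R by rw [hR_def]; ring] at h
    have h2 := ENNReal.toReal_mono (ENNReal.mul_ne_top ENNReal.ofReal_ne_top hβt) h
    rw [ENNReal.toReal_mul, ENNReal.toReal_ofReal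
      (mul_nonneg hA'.le (Real.rpow_nonneg (mul_nonneg (h2kp k).le h2Ap.le) γ))] at h2
    show (μ (Bk k)).toReal ≤ _
    rw [hBkval k]
    exact h2
  have hμbk : ∀ k : ℕ, μ (Bk k) = ENNReal.ofReal (bk k) := fun k =>
    (ENNReal.ofReal_toReal (hBkfin k)).symm
  -- annulus estimates
  have hann : ∀ k : ℕ, ∫⁻ x in (Bk (k+1) \ Bk k), (‖Ra x‖₊ : ℝ≥0∞) ^ p ∂μ
      ≤ ENNReal.ofReal D1 * ENNReal.ofReal r ^ k := by
    intro k
    have h2km : (0:ℝ) < (2:ℝ)^(-(k:ℝ)*m) := Real.rpow_pos_of_pos two_pos _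
    set M : ℝ := CC0 * (2:ℝ)^(-(k:ℝ)*m) * (bk k)⁻¹ * I1 with hM_def
    have hM0 : 0 ≤ M := by
      rw [hM_def]
      exact mul_nonneg (mul_nonneg (mul_nonneg hCC0.le h2km.le)
        (inv_nonneg.mpr (hbk0 k).le)) hI10
    have hpt : ∀ x ∈ Bk (k+1) \ Bk k,
        (‖Ra x‖₊ : ℝ≥0∞) ^ p ≤ ENNReal.ofReal (M ^ p) := by
      intro x hx
      have hxk : (2:ℝ)^k * R ≤ d x_B x :=
        not_lt.mp (fun h => hx.2 ((hBkmem k x).mpr h))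
      have h1 : ‖Ra x‖ ≤ M := by
        rw [Real.norm_eq_abs, hM_def]; exact key k x hxk
      rw [show (‖Ra x‖₊ : ℝ≥0∞) = ENNReal.ofReal ‖Ra x‖ from (ofReal_norm _).symm,
        ENNReal.ofReal_rpow_of_nonneg (norm_nonneg _) hp0.le]
      exact ENNReal.ofReal_le_ofReal (Real.rpow_le_rpow (norm_nonneg _) h1 hp0.le)
    have hmeasD : MeasurableSet (Bk (k+1) \ Bk k) := (hBkmeas _).diff (hBkmeas _)
    have hle1 : ∫⁻ x in (Bk (k+1) \ Bk k), (‖Ra x‖₊ : ℝ≥0∞) ^ p ∂μ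
        ≤ ENNReal.ofReal (M ^ p) * μ (Bk (k+1)) := by
      rw [← lintegral_indicator hmeasD]
      calc ∫⁻ x, (Bk (k+1) \ Bk k).indicator (fun x => (‖Ra x‖₊ : ℝ≥0∞) ^ p) x ∂μ
          ≤ ∫⁻ x, (Bk (k+1) \ Bk k).indicator
              (fun _ => ENNReal.ofReal (M^p)) x ∂μ := by
            apply lintegral_mono
            intro x
            by_cases hx : x ∈ Bk (k+1) \ Bk k
            · simpa [Set.indicator_of_mem hx] using hpt x hx
            · simp [Set.indicator_of_notMem hx]
        _ = ENNReal.ofReal (M^p) * μ (Bk (k+1) \ Bk k) := by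
            rw [lintegral_indicator hmeasD]
            simp [Measure.restrict_apply_univ]
        _ ≤ ENNReal.ofReal (M^p) * μ (Bk (k+1)) :=
            mul_le_mul_right (measure_mono Set.diff_subset) _
    -- real arithmetic
    have hI1p : I1 ^ p ≤ b ^ (p - 1) := by
      calc I1 ^ p ≤ (b ^ (1 - 1/p)) ^ p := Real.rpow_le_rpow hI10 hI1b hp0.le
        _ = b ^ (p - 1) := by
          rw [← Real.rpow_mul hb0.le]
          congr 1
          field_simp
    have hbkinv : ((bk k)⁻¹) ^ p = (bk k) ^ (-p) := by
      rw [Real.inv_rpow (hbk0 k).le, ← Real.rpow_neg (hbk0 k).le]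
    have hMp : M ^ p = CC0 ^ p * ((2:ℝ)^(-(k:ℝ)*m)) ^ p * (bk k) ^ (-p) * I1 ^ p := by
      rw [hM_def,
        Real.mul_rpow (mul_nonneg (mul_nonneg hCC0.le h2km.le)
          (inv_nonneg.mpr (hbk0 k).le)) hI10,
        Real.mul_rpow (mul_nonneg hCC0.le h2km.le) (inv_nonneg.mpr (hbk0 k).le),
        Real.mul_rpow hCC0.le h2km.le, hbkinv]
    have hstep : (bk k) ^ (-p) * bk k = (bk k) ^ (1 - p) := by
      nth_rewrite 2 [← Real.rpow_one (bk k)]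
      rw [← Real.rpow_add (hbk0 k), show -p + 1 = 1 - p by ring]
    have hbkp : (bk k) ^ (1-p)
        ≤ (A' * (2*A₀)^γ) ^ (1-p) * ((2:ℝ)^k) ^ (γ*(1-p)) * b ^ (1-p) := by
      have hbase : A' * ((2:ℝ)^k * (2*A₀))^γ * b
          = (A' * (2*A₀)^γ) * ((2:ℝ)^k)^γ * b := by
        rw [Real.mul_rpow (h2kp k).le h2Ap.le]; ring
      calc (bk k) ^ (1-p) ≤ (A' * ((2:ℝ)^k * (2*A₀))^γ * b) ^ (1-p) :=
            Real.rpow_le_rpow (hbk0 k).le (hbkk k) (by linarith)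
        _ = (A' * (2*A₀)^γ) ^ (1-p) * ((2:ℝ)^k) ^ (γ*(1-p)) * b ^ (1-p) := by
            rw [hbase,
              Real.mul_rpow (mul_nonneg hA2γ.le (Real.rpow_nonneg (h2kp k).le γ)) hb0.le,
              Real.mul_rpow hA2γ.le (Real.rpow_nonneg (h2kp k).le γ),
              ← Real.rpow_mul (h2kp k).le]
    have hgeom : ((2:ℝ)^(-(k:ℝ)*m)) ^ p * ((2:ℝ)^k) ^ (γ*(1-p)) = r ^ k := by
      rw [← Real.rpow_natCast (2:ℝ) k,
        ← Real.rpow_mul (by norm_num : (0:ℝ) ≤ 2),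
        ← Real.rpow_mul (by norm_num : (0:ℝ) ≤ 2),
        ← Real.rpow_add two_pos,
        hr_def, ← Real.rpow_natCast ((2:ℝ) ^ (-ε)) k,
        ← Real.rpow_mul (by norm_num : (0:ℝ) ≤ 2)]
      congr 1
      rw [hε_def]; ring
    have hbb : b ^ (1-p) * b ^ (p-1) = 1 := by
      rw [← Real.rpow_add hb0, show (1-p) + (p-1) = 0 by ring, Real.rpow_zero]
    have hQ0 : (0:ℝ) ≤ (A' * 2^γ) * (CC0 ^ p) * (((2:ℝ)^(-(k:ℝ)*m)) ^ p) :=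
      mul_nonneg (mul_nonneg hA2g.le (Real.rpow_nonneg hCC0.le p))
        (Real.rpow_nonneg h2km.le p)
    have hreal : M ^ p * bk (k+1) ≤ D1 * r ^ k := by
      calc M ^ p * bk (k+1)
          ≤ M ^ p * (A' * 2^γ * bk k) :=
            mul_le_mul_of_nonneg_left (hbk1 k) (Real.rpow_nonneg hM0 p)
        _ = (A' * 2^γ) * (CC0 ^ p) * (((2:ℝ)^(-(k:ℝ)*m)) ^ p) * I1 ^ p
              * ((bk k) ^ (-p) * bk k) := by
            rw [hMp]; ring
        _ = (A' * 2^γ) * (CC0 ^ p) * (((2:ℝ)^(-(k:ℝ)*m)) ^ p) * I1 ^ p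
              * (bk k) ^ (1-p) := by rw [hstep]
        _ ≤ (A' * 2^γ) * (CC0 ^ p) * (((2:ℝ)^(-(k:ℝ)*m)) ^ p) * (b ^ (p-1))
              * (bk k) ^ (1-p) := by
            exact mul_le_mul_of_nonneg_right
              (mul_le_mul_of_nonneg_left hI1p hQ0)
              (Real.rpow_nonneg (hbk0 k).le _)
        _ ≤ (A' * 2^γ) * (CC0 ^ p) * (((2:ℝ)^(-(k:ℝ)*m)) ^ p) * (b ^ (p-1))
              * ((A' * (2*A₀)^γ) ^ (1-p) * ((2:ℝ)^k) ^ (γ*(1-p)) * b ^ (1-p)) := by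
            exact mul_le_mul_of_nonneg_left hbkp
              (mul_nonneg hQ0 (Real.rpow_nonneg hb0.le _))
        _ = (CC0 ^ p * (A' * 2^γ) * (A' * (2*A₀)^γ) ^ (1-p))
              * ((((2:ℝ)^(-(k:ℝ)*m)) ^ p) * ((2:ℝ)^k) ^ (γ*(1-p)))
              * (b ^ (1-p) * b ^ (p-1)) := by ring
        _ = D1 * r ^ k := by rw [hgeom, hbb, hD1_def, mul_one]
    calc ∫⁻ x in (Bk (k+1) \ Bk k), (‖Ra x‖₊ : ℝ≥0∞) ^ p ∂μ
        ≤ ENNReal.ofReal (M ^ p) * μ (Bk (k+1)) := hle1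
      _ = ENNReal.ofReal (M ^ p * bk (k+1)) := by
          rw [hμbk (k+1), ← ENNReal.ofReal_mul (Real.rpow_nonneg hM0 p)]
      _ ≤ ENNReal.ofReal (D1 * r ^ k) := ENNReal.ofReal_le_ofReal hreal
      _ = ENNReal.ofReal D1 * ENNReal.ofReal r ^ k := by
          rw [ENNReal.ofReal_mul hD1.le, ENNReal.ofReal_pow hr0.le]
  -- on-ball estimate
  have honball : ∫⁻ x in Bk 0, (‖Ra x‖₊ : ℝ≥0∞) ^ p ∂μ ≤ ENNReal.ofReal D0 := by
    obtain ⟨g, hgm, hgle, hgeq⟩ := exists_measurable_le_lintegral_eq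
      (μ.restrict (Bk 0)) (fun x => (‖Ra x‖₊ : ℝ≥0∞) ^ p)
    have hgle2 : ∀ x, g x ^ ((2:ℝ)/p) ≤ (‖Ra x‖₊ : ℝ≥0∞) ^ (2:ℝ) := by
      intro x
      calc g x ^ ((2:ℝ)/p) ≤ ((‖Ra x‖₊ : ℝ≥0∞) ^ p) ^ ((2:ℝ)/p) :=
            ENNReal.rpow_le_rpow (hgle x) (div_nonneg (by norm_num) hp0.le)
        _ = (‖Ra x‖₊ : ℝ≥0∞) ^ (2:ℝ) := by
            rw [← ENNReal.rpow_mul]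
            congr 1
            field_simp
    have hconj : Real.HolderConjugate ((2:ℝ)/p) ((2:ℝ)/(2-p)) :=
      Real.holderConjugate_iff.mpr ⟨by rw [one_lt_div hp0]; linarith, by field_simp; ring⟩
    have hH := ENNReal.lintegral_mul_le_Lp_mul_Lq (μ.restrict (Bk 0)) hconj
      hgm.aemeasurable (aemeasurable_const (b := (1:ℝ≥0∞)))
    simp only [Pi.mul_apply, mul_one, ENNReal.one_rpow] at hH
    set S : ℝ≥0∞ := ∫⁻ x, (‖Ra x‖₊ : ℝ≥0∞) ^ (2:ℝ) ∂μ with hS_def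
    have hS : ∫⁻ x, g x ^ ((2:ℝ)/p) ∂(μ.restrict (Bk 0)) ≤ S :=
      le_trans (lintegral_mono hgle2)
        (lintegral_mono' Measure.restrict_le_self le_rfl)
    have hμ1 : ∫⁻ _, (1:ℝ≥0∞) ∂(μ.restrict (Bk 0)) = μ (Bk 0) := by
      rw [lintegral_one, Measure.restrict_apply_univ]
    have heLp2 : eLpNorm Ra 2 μ = S ^ ((1:ℝ)/2) := by
      rw [hS_def, eLpNorm_eq_lintegral_rpow_enorm_toReal (by norm_num) (by norm_num)]
      norm_num; rfl
    have hB0le : μ (Bk 0) ≤ ENNReal.ofReal (A' * (2*A₀)^γ) * μ B := by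
      have h := hX.doubling x_B r_B (2*A₀) h2A
      rw [← hB_def] at h
      rw [show (2*A₀) * r_B = (2:ℝ)^(0:ℕ) * R by rw [hR_def, pow_zero, one_mul]] at h
      rw [hBkval 0]
      exact h
    have hex1 : 1/((2:ℝ)/p) = p/2 := one_div_div 2 p
    have hex2 : 1/((2:ℝ)/(2-p)) = 1 - p/2 := by
      rw [one_div_div]; ring
    rw [hex1, hex2] at hH
    have hpm : (0:ℝ) ≤ 1 - p/2 := by linarith
    calc ∫⁻ x in Bk 0, (‖Ra x‖₊ : ℝ≥0∞) ^ p ∂μ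
        = ∫⁻ x, g x ∂(μ.restrict (Bk 0)) := hgeq
      _ ≤ (∫⁻ x, g x ^ ((2:ℝ)/p) ∂(μ.restrict (Bk 0))) ^ (p/2)
          * (∫⁻ _, (1:ℝ≥0∞) ∂(μ.restrict (Bk 0))) ^ (1 - p/2) := hH
      _ ≤ S ^ (p/2) * (μ (Bk 0)) ^ (1 - p/2) := by
          rw [hμ1]
          exact mul_le_mul_left (ENNReal.rpow_le_rpow hS (by linarith)) _
      _ = (S ^ ((1:ℝ)/2)) ^ p * (μ (Bk 0)) ^ (1 - p/2) := by
          rw [← ENNReal.rpow_mul]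
          congr 2
          ring
      _ = (eLpNorm Ra 2 μ) ^ p * (μ (Bk 0)) ^ (1 - p/2) := by rw [← heLp2]
      _ ≤ (ENNReal.ofReal NR * μ B ^ ((1:ℝ)/2 - 1/p)) ^ p
          * (ENNReal.ofReal (A' * (2*A₀)^γ) * μ B) ^ (1 - p/2) := by
          apply mul_le_mul'
          · exact ENNReal.rpow_le_rpow
              (le_trans hRa2 (mul_le_mul_right ha2 _)) hp0.le
          · exact ENNReal.rpow_le_rpow hB0le hpm
      _ = ENNReal.ofReal D0 := by
          rw [ENNReal.mul_rpow_of_nonneg _ _ hp0.le,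
            ENNReal.mul_rpow_of_nonneg _ _ hpm,
            ← ENNReal.rpow_mul,
            ENNReal.ofReal_rpow_of_nonneg hNR hp0.le,
            ENNReal.ofReal_rpow_of_nonneg hA2γ.le hpm,
            show ((1:ℝ)/2 - 1/p) * p = p/2 - 1 by field_simp,
            mul_mul_mul_comm, ← ENNReal.rpow_add _ _ hβ0 hβt,
            show (p/2 - 1) + (1 - p/2) = 0 by ring, ENNReal.rpow_zero, mul_one,
            ← ENNReal.ofReal_mul (Real.rpow_nonneg hNR p), hD0_def]
  -- covering
  have hcomp : ∫⁻ x in (Bk 0)ᶜ, (‖Ra x‖₊ : ℝ≥0∞) ^ p ∂μ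
      ≤ ENNReal.ofReal D1 * (1 - ENNReal.ofReal r)⁻¹ := by
    have hsub : (Bk 0)ᶜ ⊆ ⋃ k : ℕ, (Bk (k+1) \ Bk k) := by
      intro x hx
      have hx0 : ¬ d x_B x < (2:ℝ)^(0:ℕ) * R := fun h => hx ((hBkmem 0 x).mpr h)
      have hex : ∃ n : ℕ, d x_B x < (2:ℝ)^(n+1) * R := by
        obtain ⟨n, hn⟩ := pow_unbounded_of_one_lt (d x_B x / R) (one_lt_two (α := ℝ))
        refine ⟨n, ?_⟩
        rw [div_lt_iff₀ hR0] at hn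
        have hnn : (2:ℝ)^n * R ≤ (2:ℝ)^(n+1) * R := by
          apply mul_le_mul_of_nonneg_right _ hR0.le
          exact pow_le_pow_right₀ one_le_two (Nat.le_succ n)
        calc d x_B x < 2^n * R := hn
          _ ≤ (2:ℝ)^(n+1) * R := hnn
      refine Set.mem_iUnion.mpr
        ⟨Nat.find hex, ⟨(hBkmem _ x).mpr (Nat.find_spec hex), ?_⟩⟩
      intro hmem
      have hmem' : d x_B x < (2:ℝ)^(Nat.find hex) * R := (hBkmem _ x).mp hmem
      cases hfind : Nat.find hex with
      | zero => rw [hfind] at hmem'; exact hx0 hmem'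
      | succ j =>
        have hmin := Nat.find_min hex (m := j) (by omega)
        rw [hfind] at hmem'
        exact hmin hmem'
    calc ∫⁻ x in (Bk 0)ᶜ, (‖Ra x‖₊ : ℝ≥0∞) ^ p ∂μ
        ≤ ∫⁻ x in ⋃ k : ℕ, (Bk (k+1) \ Bk k), (‖Ra x‖₊ : ℝ≥0∞) ^ p ∂μ :=
          lintegral_mono' (Measure.restrict_mono hsub le_rfl) le_rfl
      _ ≤ ∑' k : ℕ, ∫⁻ x in (Bk (k+1) \ Bk k), (‖Ra x‖₊ : ℝ≥0∞) ^ p ∂μ :=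
          lintegral_iUnion_le _ _
      _ ≤ ∑' k : ℕ, ENNReal.ofReal D1 * ENNReal.ofReal r ^ k :=
          ENNReal.tsum_le_tsum hann
      _ = ENNReal.ofReal D1 * (1 - ENNReal.ofReal r)⁻¹ := by
          rw [ENNReal.tsum_mul_left, ENNReal.tsum_geometric]
  -- total
  have htot : ∫⁻ x, (‖Ra x‖₊ : ℝ≥0∞) ^ p ∂μ ≤ ENNReal.ofReal Ctot := by
    rw [← lintegral_add_compl (fun x => (‖Ra x‖₊ : ℝ≥0∞) ^ p) (hBkmeas 0)]
    have h2 : ENNReal.ofReal D1 * (1 - ENNReal.ofReal r)⁻¹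
        = ENNReal.ofReal (D1 * (1-r)⁻¹) := by
      rw [ENNReal.ofReal_mul hD1.le,
        ENNReal.ofReal_inv_of_pos (by linarith : (0:ℝ) < 1 - r),
        ENNReal.ofReal_sub 1 hr0.le, ENNReal.ofReal_one]
    calc (∫⁻ x in Bk 0, (‖Ra x‖₊ : ℝ≥0∞) ^ p ∂μ)
          + ∫⁻ x in (Bk 0)ᶜ, (‖Ra x‖₊ : ℝ≥0∞) ^ p ∂μ
        ≤ ENNReal.ofReal D0 + ENNReal.ofReal D1 * (1 - ENNReal.ofReal r)⁻¹ :=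
          add_le_add honball hcomp
      _ = ENNReal.ofReal Ctot := by
          rw [h2, ← ENNReal.ofReal_add hD0
            (mul_nonneg hD1.le (inv_nonneg.mpr (by linarith))), hCtot_def]
  have hq0 : ENNReal.ofReal p ≠ 0 := (ENNReal.ofReal_pos.mpr hp0).ne'
  rw [eLpNorm_eq_lintegral_rpow_enorm_toReal hq0 ENNReal.ofReal_ne_top,
    ENNReal.toReal_ofReal hp0.le]
  calc (∫⁻ x, (‖Ra x‖₊ : ℝ≥0∞) ^ p ∂μ) ^ (1/p)
      ≤ (ENNReal.ofReal Ctot) ^ (1/p) :=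
        ENNReal.rpow_le_rpow htot (one_div_nonneg.mpr hp0.le)
    _ = ENNReal.ofReal (Ctot ^ (1/p)) := ENNReal.ofReal_rpow_of_pos hCtot
end
end
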